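/- arXiv:1810.05522 — 4 statements merged into one kernel-verified Lean document; each statement's English description precedes it below -/
import Mathlib

section
/- Let ρ = Σ_{α=1}^n λ_α |ξ_α^1⟩⟨ξ_α^1| ⊗ ⋯ ⊗ |ξ_α^N⟩⟨ξ_α^N| where all λ_α > 0 and each ξ_α^j ∈ ℂ^d is a unit vector. If ρ is permutationally symmetric, i.e. ρ = P_S ρ P_S, then |ξ_α^i⟩⟨ξ_α^i| = |ξ_α^j⟩⟨ξ_α^j| for every α = 1,…,n and all 1 ≤ i, j ≤ N. -/
open scoped BigOperators ComplexConjugate ComplexOrder Matrix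
noncomputable section
open MeasureTheory

namespace DSym

/-- Index set of the computational basis of `(ℂ^d)^{⊗N}`. -/
abbrev Idx (d N : ℕ) := Fin N → Fin d

/-- `|i| = i_1 + ⋯ + i_N`. -/
def wsum {d N : ℕ} (i : Idx d N) : ℕ := ∑ j, (i j : ℕ)

/-- `C(N,k)_d = #{i ∈ {0,…,d−1}^N : |i| = k}`. -/
def Ccount (d N k : ℕ) : ℕ := (Finset.univ.filter (fun i : Idx d N => wsum i = k)).card

/-- The D-symmetrizator `P_D`. -/
def PD (d N : ℕ) : Matrix (Idx d N) (Idx d N) ℂ :=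
  Matrix.of fun i j => if wsum i = wsum j then ((Ccount d N (wsum j) : ℂ))⁻¹ else 0

/-- The symmetrizator `P_S`. -/
def PS (d N : ℕ) : Matrix (Idx d N) (Idx d N) ℂ :=
  Matrix.of fun i j =>
    ((N.factorial : ℂ))⁻¹ *
      ((Finset.univ.filter (fun σ : Equiv.Perm (Fin N) => i = fun k => j (σ k))).card : ℂ)

/-- The product state `|ξ^1⟩⟨ξ^1| ⊗ ⋯ ⊗ |ξ^N⟩⟨ξ^N|` as a matrix. -/
def prodProj {d N : ℕ} (ξ : Fin N → (Fin d → ℂ)) : Matrix (Idx d N) (Idx d N) ℂ :=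
  Matrix.of fun i i' => ∏ j, ξ j (i j) * conj (ξ j (i' j))

/-- Full separability of a multipartite state. -/
def FullySep {d N : ℕ} (ρ : Matrix (Idx d N) (Idx d N) ℂ) : Prop :=
  ∃ (n : ℕ) (lam : Fin n → ℝ) (ξ : Fin n → Fin N → (Fin d → ℂ)),
    (∀ α, 0 < lam α) ∧ (∀ α j, ∑ x, Complex.normSq (ξ α j x) = 1) ∧
      ρ = ∑ α, (lam α : ℂ) • prodProj (ξ α)

/-- The restricted Dicke vector `|R_{N,d;k}⟩`. -/
def Rvec (d N k : ℕ) : Idx d N → ℂ := fun i => if wsum i = k then 1 else 0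

/-- The rank-one operator `|R_{N,d;k}⟩⟨R_{N,d;k}|`. -/
def RProj (d N k : ℕ) : Matrix (Idx d N) (Idx d N) ℂ :=
  Matrix.vecMulVec (Rvec d N k) (star (Rvec d N k))

/-- Diagonal restricted Dicke state with coefficients `p`. -/
def dickeDiag (d N : ℕ) (p : ℕ → ℝ) : Matrix (Idx d N) (Idx d N) ℂ :=
  ∑ k ∈ Finset.range (N * (d - 1) + 1), (p k : ℂ) • RProj d N k

/-- Partial transposition of the first `m` tensor factors (entrywise). -/
def Gamma {d N : ℕ} (m : ℕ) (ρ : Matrix (Idx d N) (Idx d N) ℂ) :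
    Matrix (Idx d N) (Idx d N) ℂ :=
  Matrix.of fun i j =>
    ρ (fun k => if (k : ℕ) < m then j k else i k) (fun k => if (k : ℕ) < m then i k else j k)

/-- D-symmetry of a state: `ρ = P_D ρ P_D`. -/
def IsDSymm {d N : ℕ} (ρ : Matrix (Idx d N) (Idx d N) ℂ) : Prop :=
  ρ = PD d N * ρ * PD d N

/-- A pure fully separable D-symmetric state `σ = (|ξ⟩⟨ξ|)^{⊗N}`, `ξ` a unit vector. -/
def PureDSymmProd {d N : ℕ} (σ : Matrix (Idx d N) (Idx d N) ℂ) : Prop :=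
  ∃ ξ : Fin d → ℂ,
    (∑ x, Complex.normSq (ξ x) = 1) ∧ σ = prodProj (fun _ : Fin N => ξ) ∧ IsDSymm σ

/-- Entanglement witness for the D-symmetric system. -/
def IsDWitness {d N : ℕ} (W : Matrix (Idx d N) (Idx d N) ℂ) : Prop :=
  W.IsHermitian ∧ W = PD d N * W * PD d N ∧
    ∀ σ : Matrix (Idx d N) (Idx d N) ℂ, PureDSymmProd σ → 0 ≤ (W * σ).trace

/-- The dual restricted Dicke vector. -/
def Rtilde (d N k : ℕ) : Idx d N → ℂ := ((Ccount d N k : ℂ))⁻¹ • Rvec d N k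

/-- Solution of the generalized moment problem on `[0,∞)`. -/
def IsGenMomentSolution (n : ℕ) (p : ℕ → ℝ) : Prop :=
  ∃ (σ : Measure ℝ) (M : ℝ), IsFiniteMeasure σ ∧ σ {x | x < 0} = 0 ∧
    (∀ k ≤ n, Integrable (fun t => t ^ k) σ) ∧ 0 ≤ M ∧
    (∀ k < n, p k = ∫ t, t ^ k ∂σ) ∧ p n = (∫ t, t ^ n ∂σ) + M

/-- Solution of the strict moment problem on `[0,∞)`. -/
def IsStrictMomentSolution (n : ℕ) (p : ℕ → ℝ) : Prop :=
  ∃ σ : Measure ℝ, IsFiniteMeasure σ ∧ σ {x | x < 0} = 0 ∧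
    (∀ k ≤ n, Integrable (fun t => t ^ k) σ) ∧ (∀ k ≤ n, p k = ∫ t, t ^ k ∂σ)


/-- The normalization constant `C_z = (Σ_{i=0}^{d−1} |z|^{2i})^{−1/2}`. -/
def Cz (d : ℕ) (z : ℂ) : ℝ := (∑ j ∈ Finset.range d, ‖z‖ ^ (2 * j)) ^ (-(1/2 : ℝ))

/-- The vector `ζ_z = C_z Σ_{i=0}^{d−1} z^i |i⟩`. -/
def zeta (d : ℕ) (z : ℂ) : Fin d → ℂ := fun i => (Cz d z : ℂ) * z ^ (i : ℕ)

/-- The basis vector `|d−1⟩`. -/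
def topVec (d : ℕ) : Fin d → ℂ := fun x => if (x : ℕ) = d - 1 then 1 else 0

/-- Sum of the first `m` coordinates of a tuple. -/
def wsumFirst {d N : ℕ} (m : ℕ) (i : Idx d N) : ℕ :=
  ∑ j ∈ Finset.univ.filter (fun j : Fin N => (j : ℕ) < m), (i j : ℕ)

/-- Sum of the last `N − m` coordinates of a tuple. -/
def wsumLast {d N : ℕ} (m : ℕ) (i : Idx d N) : ℕ :=
  ∑ j ∈ Finset.univ.filter (fun j : Fin N => m ≤ (j : ℕ)), (i j : ℕ)

/-- The vector `|R_{m,d;a}⟩ ⊗ |R_{N−m,d;b}⟩`, viewed inside `(ℂ^d)^{⊗N}`. -/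
def splitVec (d N m : ℕ) (a b : ℤ) : Idx d N → ℂ :=
  fun i => if (wsumFirst m i : ℤ) = a ∧ (wsumLast m i : ℤ) = b then 1 else 0

/-- The operator `A_s` from the decomposition of `Γ_m(ρ)`. -/
def Amat (d N m : ℕ) (p : ℕ → ℝ) (s : ℤ) : Matrix (Idx d N) (Idx d N) ℂ :=
  ∑ k ∈ Finset.Icc (max 0 (-s)) (min ((m : ℤ) * ((d : ℤ) - 1)) ((((N : ℤ) - (m : ℤ)) * ((d : ℤ) - 1)) - s)),
  ∑ l ∈ Finset.Icc (max 0 (-s)) (min ((m : ℤ) * ((d : ℤ) - 1)) ((((N : ℤ) - (m : ℤ)) * ((d : ℤ) - 1)) - s)),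
    (p (k + l + s).toNat : ℂ) •
      Matrix.vecMulVec (splitVec d N m k (k + s)) (star (splitVec d N m l (l + s)))

/-- The permutation unitary `F_σ`, `F_σ|ξ_1,…,ξ_N⟩ = |ξ_{σ⁻¹(1)},…,ξ_{σ⁻¹(N)}⟩`. -/
def Fmat (d N : ℕ) (σ : Equiv.Perm (Fin N)) : Matrix (Idx d N) (Idx d N) ℂ :=
  Matrix.of fun x i => if x = fun k => i (σ.symm k) then 1 else 0

/-- Partial transposition with respect to the binary string `b`. -/
def partialT {d N : ℕ} (b : Fin N → Bool) (ρ : Matrix (Idx d N) (Idx d N) ℂ) :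
    Matrix (Idx d N) (Idx d N) ℂ :=
  Matrix.of fun i j => ρ (fun k => if b k then j k else i k) (fun k => if b k then i k else j k)

end DSym
end


namespace DSym

noncomputable section Stmt2Aux

open scoped ComplexConjugate

/-- Complex inner product on `Fin d → ℂ` (conjugate-linear in the first slot). -/
def cIP {d : ℕ} (a b : Fin d → ℂ) : ℂ := ∑ x, conj (a x) * b x

/-- The product vector `⊗ⱼ ξⱼ` as an element of `(ℂ^d)^{⊗N}`. -/
def Xi {d N : ℕ} (ξ : Fin N → (Fin d → ℂ)) : Idx d N → ℂ := fun i => ∏ j, ξ j (i j)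

lemma cIP_conj {d : ℕ} (a b : Fin d → ℂ) : cIP b a = conj (cIP a b) := by
  simp [cIP, map_sum, mul_comm]

lemma cIP_self {d : ℕ} {a : Fin d → ℂ} (ha : ∑ x, Complex.normSq (a x) = 1) :
    cIP a a = 1 := by
  have h : ∀ x, conj (a x) * a x = ((Complex.normSq (a x) : ℝ) : ℂ) := fun x => by
    rw [mul_comm, Complex.mul_conj]
  simp only [cIP, h]
  exact_mod_cast ha

/-- View a vector of `Fin d → ℂ` inside `EuclideanSpace ℂ (Fin d)`. -/
def toE {d : ℕ} (a : Fin d → ℂ) : EuclideanSpace ℂ (Fin d) :=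
  (WithLp.equiv 2 (Fin d → ℂ)).symm a

lemma toE_apply {d : ℕ} (a : Fin d → ℂ) (x : Fin d) : toE a x = a x := rfl

lemma inner_toE {d : ℕ} (a b : Fin d → ℂ) :
    (inner ℂ (toE a) (toE b) : ℂ) = cIP a b := by
  simp [toE, PiLp.inner_apply, RCLike.inner_apply', cIP, mul_comm]

lemma norm_toE {d : ℕ} {a : Fin d → ℂ} (ha : ∑ x, Complex.normSq (a x) = 1) :
    ‖toE a‖ = 1 := by
  rw [EuclideanSpace.norm_eq]
  have : ∑ x, ‖toE a x‖ ^ 2 = 1 := by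
    rw [← ha]
    exact Finset.sum_congr rfl fun x _ => by
      rw [toE_apply, Complex.sq_norm]
  rw [this, Real.sqrt_one]

lemma abs_cIP_le_one {d : ℕ} {a b : Fin d → ℂ}
    (ha : ∑ x, Complex.normSq (a x) = 1) (hb : ∑ x, Complex.normSq (b x) = 1) :
    ‖cIP a b‖ ≤ 1 := by
  have := norm_inner_le_norm (𝕜 := ℂ) (toE a) (toE b)
  rw [inner_toE, norm_toE ha, norm_toE hb] at this
  simpa using this

/-- Equality case of Cauchy–Schwarz yields equal rank-one projectors. -/
lemma proj_eq_of_abs_cIP {d : ℕ} {a b : Fin d → ℂ}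
    (ha : ∑ x, Complex.normSq (a x) = 1) (hb : ∑ x, Complex.normSq (b x) = 1)
    (h : ‖cIP a b‖ = 1) :
    Matrix.vecMulVec a (star a) = Matrix.vecMulVec b (star b) := by
  have ha0 : toE a ≠ 0 := by
    intro h0
    have := norm_toE ha; rw [h0, norm_zero] at this; norm_num at this
  have hb0 : toE b ≠ 0 := by
    intro h0
    have := norm_toE hb; rw [h0, norm_zero] at this; norm_num at this
  have heq : ‖(inner ℂ (toE a) (toE b) : ℂ)‖ = ‖toE a‖ * ‖toE b‖ := by
    rw [inner_toE, norm_toE ha, norm_toE hb]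
    simpa using h
  obtain ⟨r, hr0, hrb⟩ := (norm_inner_eq_norm_iff ha0 hb0).mp heq
  have hrabs : Complex.normSq r = 1 := by
    have : ‖toE b‖ = ‖r‖ * ‖toE a‖ := by rw [hrb, norm_smul]
    rw [norm_toE ha, norm_toE hb, mul_one] at this
    have : ‖r‖ ^ 2 = 1 := by rw [← this]; norm_num
    rw [Complex.normSq_eq_norm_sq]
    exact this
  have hb_eq : ∀ x, b x = r * a x := fun x => by
    have := congrArg (fun v : EuclideanSpace ℂ (Fin d) => v x) hrb
    simpa [toE_apply, smul_eq_mul] using this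
  ext p q
  simp only [Matrix.vecMulVec_apply, Pi.star_apply, RCLike.star_def, hb_eq]
  have : r * a p * conj (r * a q) = (r * conj r) * (a p * conj (a q)) := by
    rw [map_mul]; ring
  rw [this, Complex.mul_conj, hrabs]
  norm_num

lemma prodProj_eq {d N : ℕ} (ξ : Fin N → (Fin d → ℂ)) :
    prodProj ξ = Matrix.vecMulVec (Xi ξ) (star (Xi ξ)) := by
  ext i i'
  show (∏ j, ξ j (i j) * conj (ξ j (i' j)))
      = (∏ j, ξ j (i j)) * star (∏ j, ξ j (i' j))
  rw [Finset.prod_mul_distrib]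
  congr 1
  exact (map_prod (starRingEnd ℂ) _ _).symm

lemma PS_apply {d N : ℕ} (i j : Idx d N) :
    PS d N i j = ((N.factorial : ℂ))⁻¹ *
      ∑ σ : Equiv.Perm (Fin N), (if i = fun k => j (σ k) then (1 : ℂ) else 0) := by
  have h : (Finset.univ.filter (fun σ : Equiv.Perm (Fin N) => i = fun k => j (σ k))).card
      = ∑ σ : Equiv.Perm (Fin N), (if i = fun k => j (σ k) then 1 else 0) :=
    Finset.card_filter _ _
  rw [PS, Matrix.of_apply, h]
  push_cast
  rfl

lemma PS_idem (d N : ℕ) : PS d N * PS d N = PS d N := by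
  have hfac : ((N.factorial : ℂ)) ≠ 0 := by
    exact_mod_cast Nat.cast_ne_zero.mpr (Nat.factorial_ne_zero N)
  ext i j
  rw [Matrix.mul_apply]
  simp only [PS_apply]
  have : ∀ k : Idx d N,
      (((N.factorial : ℂ))⁻¹ * ∑ σ : Equiv.Perm (Fin N), (if i = fun m => k (σ m) then (1:ℂ) else 0)) *
      (((N.factorial : ℂ))⁻¹ * ∑ τ : Equiv.Perm (Fin N), (if k = fun m => j (τ m) then (1:ℂ) else 0))
      = ((N.factorial : ℂ))⁻¹ * ((N.factorial : ℂ))⁻¹ *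
        ∑ τ : Equiv.Perm (Fin N), ∑ σ : Equiv.Perm (Fin N),
          (if k = fun m => j (τ m) then (1:ℂ) else 0) * (if i = fun m => k (σ m) then (1:ℂ) else 0) := by
    intro k
    rw [mul_mul_mul_comm]
    congr 1
    rw [Finset.sum_mul_sum, Finset.sum_comm]
    exact Finset.sum_congr rfl fun τ _ => Finset.sum_congr rfl fun σ _ => mul_comm _ _
  rw [Finset.sum_congr rfl (fun k _ => this k), ← Finset.mul_sum]
  rw [Finset.sum_comm]
  have hcollapse : ∀ τ : Equiv.Perm (Fin N),
      (∑ k : Idx d N, ∑ σ : Equiv.Perm (Fin N),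
        (if k = fun m => j (τ m) then (1:ℂ) else 0) * (if i = fun m => k (σ m) then (1:ℂ) else 0))
      = ∑ σ : Equiv.Perm (Fin N), (if i = fun m => j (τ (σ m)) then (1:ℂ) else 0) := by
    intro τ
    rw [Finset.sum_comm]
    refine Finset.sum_congr rfl (fun σ _ => ?_)
    rw [Finset.sum_eq_single (fun m => j (τ m))]
    · simp
    · intro k _ hk; simp [hk]
    · intro h; exact absurd (Finset.mem_univ _) h
  rw [Finset.sum_congr rfl (fun τ _ => hcollapse τ)]
  have hreindex : ∀ τ : Equiv.Perm (Fin N),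
      (∑ σ : Equiv.Perm (Fin N), (if i = fun m => j (τ (σ m)) then (1:ℂ) else 0))
      = ∑ π : Equiv.Perm (Fin N), (if i = fun m => j (π m) then (1:ℂ) else 0) := by
    intro τ
    exact Fintype.sum_equiv (Equiv.mulLeft τ) _ _ (fun σ => rfl)
  rw [Finset.sum_congr rfl (fun τ _ => hreindex τ), Finset.sum_const]
  simp only [Finset.card_univ, Fintype.card_perm, Fintype.card_fin, nsmul_eq_mul]
  field_simp

lemma sum_prod_fiber {d N : ℕ} (g : Fin N → Fin d → ℂ) :
    ∑ i : Idx d N, ∏ m, g m (i m) = ∏ m, ∑ x, g m x := by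
  exact (Fintype.prod_sum (κ := fun _ : Fin N => Fin d) (f := g)).symm

lemma trace_prodProj {d N : ℕ} {ξ : Fin N → (Fin d → ℂ)}
    (hunit : ∀ j, ∑ x, Complex.normSq (ξ j x) = 1) :
    (prodProj ξ).trace = 1 := by
  have : (prodProj ξ).trace = ∑ i : Idx d N, ∏ m, (ξ m (i m) * conj (ξ m (i m))) := by
    simp [Matrix.trace, Matrix.diag, prodProj]
  rw [this, sum_prod_fiber (fun m x => ξ m x * conj (ξ m x))]
  have : ∀ m, (∑ x, ξ m x * conj (ξ m x)) = 1 := by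
    intro m
    have : (∑ x, ξ m x * conj (ξ m x)) = ((∑ x, Complex.normSq (ξ m x) : ℝ) : ℂ) := by
      simp [Complex.mul_conj]
    rw [this, hunit m]; norm_num
  simp [this]

lemma trace_PS_mul {d N : ℕ} (ξ : Fin N → (Fin d → ℂ)) :
    (PS d N * prodProj ξ).trace =
      ((N.factorial : ℂ))⁻¹ * ∑ σ : Equiv.Perm (Fin N), ∏ m, cIP (ξ (σ⁻¹ m)) (ξ m) := by
  set c : ℂ := ((N.factorial : ℂ))⁻¹ with hc
  have hterm : ∀ (σ : Equiv.Perm (Fin N)) (j : Idx d N),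
      Xi ξ j * conj (Xi ξ (fun k => j (σ k)))
      = ∏ m, (conj (ξ (σ⁻¹ m) (j m)) * ξ m (j m)) := by
    intro σ j
    have hre : (∏ k, conj (ξ k (j (σ k)))) = ∏ m, conj (ξ (σ⁻¹ m) (j m)) := by
      have := Equiv.prod_comp σ (fun m => conj (ξ (σ⁻¹ m) (j m)))
      simpa using this
    calc Xi ξ j * conj (Xi ξ (fun k => j (σ k)))
        = (∏ m, ξ m (j m)) * ∏ k, conj (ξ k (j (σ k))) := by
          rw [Xi]; congr 1; exact map_prod (starRingEnd ℂ) _ _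
      _ = (∏ m, ξ m (j m)) * ∏ m, conj (ξ (σ⁻¹ m) (j m)) := by rw [hre]
      _ = ∏ m, (conj (ξ (σ⁻¹ m) (j m)) * ξ m (j m)) := by
          rw [← Finset.prod_mul_distrib]
          exact Finset.prod_congr rfl (fun m _ => mul_comm _ _)
  calc (PS d N * prodProj ξ).trace
      = ∑ i : Idx d N, ∑ j : Idx d N, PS d N i j * (Xi ξ j * conj (Xi ξ i)) := by
        simp only [Matrix.trace, Matrix.diag, Matrix.mul_apply, prodProj_eq,
          Matrix.vecMulVec_apply, Pi.star_apply, RCLike.star_def]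
    _ = ∑ i : Idx d N, ∑ j : Idx d N, ∑ σ : Equiv.Perm (Fin N),
          c * ((if i = fun k => j (σ k) then (1:ℂ) else 0) * (Xi ξ j * conj (Xi ξ i))) := by
        refine Finset.sum_congr rfl fun i _ => Finset.sum_congr rfl fun j _ => ?_
        rw [PS_apply, mul_assoc, Finset.sum_mul, Finset.mul_sum]
    _ = ∑ j : Idx d N, ∑ i : Idx d N, ∑ σ : Equiv.Perm (Fin N),
          c * ((if i = fun k => j (σ k) then (1:ℂ) else 0) * (Xi ξ j * conj (Xi ξ i))) := by
        rw [Finset.sum_comm]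
    _ = ∑ j : Idx d N, ∑ σ : Equiv.Perm (Fin N), ∑ i : Idx d N,
          c * ((if i = fun k => j (σ k) then (1:ℂ) else 0) * (Xi ξ j * conj (Xi ξ i))) := by
        exact Finset.sum_congr rfl fun j _ => Finset.sum_comm
    _ = ∑ σ : Equiv.Perm (Fin N), ∑ j : Idx d N, ∑ i : Idx d N,
          c * ((if i = fun k => j (σ k) then (1:ℂ) else 0) * (Xi ξ j * conj (Xi ξ i))) := by
        rw [Finset.sum_comm]
    _ = ∑ σ : Equiv.Perm (Fin N), ∑ j : Idx d N,
          c * (Xi ξ j * conj (Xi ξ (fun k => j (σ k)))) := by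
        refine Finset.sum_congr rfl fun σ _ => Finset.sum_congr rfl fun j _ => ?_
        rw [Finset.sum_eq_single (fun k => j (σ k))]
        · simp
        · intro i _ hi; simp [hi]
        · intro h; exact absurd (Finset.mem_univ _) h
    _ = ∑ σ : Equiv.Perm (Fin N), c * ∏ m, cIP (ξ (σ⁻¹ m)) (ξ m) := by
        refine Finset.sum_congr rfl fun σ _ => ?_
        rw [← Finset.mul_sum]
        congr 1
        rw [Finset.sum_congr rfl (fun j _ => hterm σ j),
          sum_prod_fiber (fun m x => conj (ξ (σ⁻¹ m) x) * ξ m x)]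
        rfl
    _ = c * ∑ σ : Equiv.Perm (Fin N), ∏ m, cIP (ξ (σ⁻¹ m)) (ξ m) := by
        rw [← Finset.mul_sum]

end Stmt2Aux

theorem stmt2 (d N : ℕ) (hd : 2 ≤ d) (hN : 2 ≤ N) (n : ℕ)
    (lam : Fin n → ℝ) (ξ : Fin n → Fin N → (Fin d → ℂ))
    (hlam : ∀ α, 0 < lam α) (hunit : ∀ α j, ∑ x, Complex.normSq (ξ α j x) = 1)
    (ρ : Matrix (Idx d N) (Idx d N) ℂ)
    (hρ : ρ = ∑ α, (lam α : ℂ) • prodProj (ξ α))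
    (hsym : ρ = PS d N * ρ * PS d N) :
    ∀ (α : Fin n) (i j : Fin N),
      Matrix.vecMulVec (ξ α i) (star (ξ α i)) = Matrix.vecMulVec (ξ α j) (star (ξ α j)) := by
  classical
  have hfacR : (0:ℝ) < (N.factorial : ℝ) := by
    exact_mod_cast Nat.factorial_pos N
  set t : Fin n → Equiv.Perm (Fin N) → ℂ :=
    fun α σ => ∏ m, cIP (ξ α (σ⁻¹ m)) (ξ α m) with ht
  have htabs : ∀ α σ, ‖t α σ‖ ≤ 1 := by
    intro α σ
    rw [ht, norm_prod]
    refine Finset.prod_le_one (fun m _ => (norm_nonneg _)) ?_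
    exact fun m _ => abs_cIP_le_one (hunit α _) (hunit α _)
  have htre : ∀ α σ, (t α σ).re ≤ 1 :=
    fun α σ => le_trans (Complex.re_le_norm _) (htabs α σ)
  -- trace identity from symmetry
  have htr : (PS d N * ρ).trace = ρ.trace := by
    conv_rhs => rw [hsym]
    rw [Matrix.trace_mul_cycle, PS_idem]
  have hL : (PS d N * ρ).trace = ∑ α, (lam α : ℂ) * (PS d N * prodProj (ξ α)).trace := by
    rw [hρ, Matrix.mul_sum, Matrix.trace_sum]
    exact Finset.sum_congr rfl fun α _ => by
      rw [Matrix.mul_smul, Matrix.trace_smul, smul_eq_mul]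
  have hR : ρ.trace = ∑ α, (lam α : ℂ) := by
    rw [hρ, Matrix.trace_sum]
    exact Finset.sum_congr rfl fun α _ => by
      rw [Matrix.trace_smul, trace_prodProj (hunit α), smul_eq_mul, mul_one]
  have key : ∑ α, (lam α : ℂ) * (PS d N * prodProj (ξ α)).trace = ∑ α, (lam α : ℂ) := by
    rw [← hL, htr, hR]
  -- real part of the trace of PS * prodProj
  have hTre : ∀ α, ((PS d N * prodProj (ξ α)).trace).re
      = (N.factorial : ℝ)⁻¹ * ∑ σ : Equiv.Perm (Fin N), (t α σ).re := by
    intro α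
    rw [trace_PS_mul (ξ α)]
    have hcast : ((N.factorial : ℂ))⁻¹ = (((N.factorial : ℝ)⁻¹ : ℝ) : ℂ) := by
      push_cast; ring
    rw [hcast, Complex.re_ofReal_mul, Complex.re_sum]
  have hTre_le : ∀ α, ((PS d N * prodProj (ξ α)).trace).re ≤ 1 := by
    intro α
    rw [hTre α]
    have hsum : ∑ σ : Equiv.Perm (Fin N), (t α σ).re ≤ (N.factorial : ℝ) := by
      calc ∑ σ : Equiv.Perm (Fin N), (t α σ).re ≤ ∑ _σ : Equiv.Perm (Fin N), (1:ℝ) :=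
            Finset.sum_le_sum (fun σ _ => htre α σ)
        _ = (N.factorial : ℝ) := by
            simp [Finset.card_univ, Fintype.card_perm]
    calc (N.factorial : ℝ)⁻¹ * ∑ σ : Equiv.Perm (Fin N), (t α σ).re
        ≤ (N.factorial : ℝ)⁻¹ * (N.factorial : ℝ) :=
          mul_le_mul_of_nonneg_left hsum (inv_nonneg.mpr hfacR.le)
      _ = 1 := inv_mul_cancel₀ hfacR.ne'
  -- each T α has real part 1
  have hTone : ∀ α, ((PS d N * prodProj (ξ α)).trace).re = 1 := by
    have hzero : ∑ α, lam α * (1 - ((PS d N * prodProj (ξ α)).trace).re) = 0 := by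
      have := congrArg Complex.re key
      rw [Complex.re_sum, Complex.re_sum] at this
      simp only [Complex.re_ofReal_mul, Complex.ofReal_re] at this
      have h2 : ∑ α, lam α * (1 - ((PS d N * prodProj (ξ α)).trace).re)
          = ∑ α, lam α - ∑ α, lam α * ((PS d N * prodProj (ξ α)).trace).re := by
        rw [← Finset.sum_sub_distrib]
        exact Finset.sum_congr rfl fun α _ => by ring
      rw [h2, this, sub_self]
    intro α
    have hnn : ∀ β ∈ Finset.univ, 0 ≤ lam β * (1 - ((PS d N * prodProj (ξ β)).trace).re) :=
      fun β _ => mul_nonneg (hlam β).le (by linarith [hTre_le β])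
    have := (Finset.sum_eq_zero_iff_of_nonneg hnn).mp hzero α (Finset.mem_univ α)
    have h1 : 1 - ((PS d N * prodProj (ξ α)).trace).re = 0 := by
      rcases mul_eq_zero.mp this with h | h
      · exact absurd h (hlam α).ne'
      · exact h
    linarith
  -- each t α σ has real part 1
  have htone : ∀ α σ, (t α σ).re = 1 := by
    intro α σ
    have hsum : ∑ τ : Equiv.Perm (Fin N), (t α τ).re = (N.factorial : ℝ) := by
      have := hTone α
      rw [hTre α] at this
      have := congrArg (fun x => (N.factorial : ℝ) * x) this
      simp only [mul_one] at this
      rw [← mul_assoc, mul_inv_cancel₀ hfacR.ne', one_mul] at this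
      exact this
    have hzero : ∑ τ : Equiv.Perm (Fin N), (1 - (t α τ).re) = 0 := by
      rw [Finset.sum_sub_distrib, hsum, Finset.sum_const]
      simp [Finset.card_univ, Fintype.card_perm]
    have hnn : ∀ τ ∈ Finset.univ, 0 ≤ 1 - (t α τ).re :=
      fun τ _ => by linarith [htre α τ]
    have := (Finset.sum_eq_zero_iff_of_nonneg hnn).mp hzero σ (Finset.mem_univ σ)
    linarith
  -- conclude
  intro α i j
  by_cases hij : i = j
  · rw [hij]
  · have hji : j ≠ i := fun h => hij h.symm
    set σ : Equiv.Perm (Fin N) := Equiv.swap i j with hσ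
    have hσinv : σ⁻¹ = σ := Equiv.swap_inv i j
    set f : Fin N → ℂ := fun m => cIP (ξ α (σ m)) (ξ α m) with hf
    have htσ : t α σ = ∏ m, f m := by
      rw [ht]
      exact Finset.prod_congr rfl fun m _ => by rw [hσinv]
    have hrest : ∏ m ∈ (Finset.univ.erase i).erase j, f m = 1 := by
      refine Finset.prod_eq_one fun m hm => ?_
      have hmj : m ≠ j := (Finset.mem_erase.mp hm).1
      have hmi : m ≠ i := (Finset.mem_erase.mp (Finset.mem_erase.mp hm).2).1
      have : σ m = m := Equiv.swap_apply_of_ne_of_ne hmi hmj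
      rw [hf]
      simp only [this]
      exact cIP_self (hunit α m)
    have hprod : ∏ m, f m = f i * (f j * ∏ m ∈ (Finset.univ.erase i).erase j, f m) := by
      rw [← Finset.mul_prod_erase Finset.univ f (Finset.mem_univ i)]
      congr 1
      rw [← Finset.mul_prod_erase (Finset.univ.erase i) f
        (Finset.mem_erase.mpr ⟨hji, Finset.mem_univ j⟩)]
    have hfi : f i = cIP (ξ α j) (ξ α i) := by
      rw [hf]; simp only [hσ, Equiv.swap_apply_left]
    have hfj : f j = cIP (ξ α i) (ξ α j) := by
      rw [hf]; simp only [hσ, Equiv.swap_apply_right]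
    set z : ℂ := cIP (ξ α i) (ξ α j) with hz
    have htval : t α σ = ((Complex.normSq z : ℝ) : ℂ) := by
      rw [htσ, hprod, hrest, mul_one, hfi, hfj, cIP_conj, mul_comm, Complex.mul_conj]
    have hnsq : Complex.normSq z = 1 := by
      have := htone α σ
      rw [htval] at this
      simpa using this
    have habs : ‖z‖ = 1 := by
      rw [Complex.norm_def, hnsq, Real.sqrt_one]
    exact proj_eq_of_abs_cIP (hunit α i) (hunit α j) habs

end DSym
end

section
/- Let ρ = Σ_{α=1}^n λ_α (|ξ_α⟩⟨ξ_α|)^{⊗N} where all λ_α > 0 and each ξ_α ∈ ℂ^d is a unit vector. If ρ is D-symmetric, i.e. ρ = P_D ρ P_D, then for each α either |ξ_α⟩⟨ξ_α| = |d−1⟩⟨d−1|, or there exists z ∈ ℂ such that |ξ_α⟩⟨ξ_α| = |ζ_z⟩⟨ζ_z|, where ζ_z = C_z Σ_{i=0}^{d−1} z^i |i⟩ and C_z = (Σ_{i=0}^{d−1} |z|^{2i})^{−1/2}. -/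
open scoped BigOperators ComplexConjugate ComplexOrder Matrix
namespace DSym

section Aux

/-- Entries of a D-symmetric matrix depend only on the weights of the indices. -/
lemma rho_entry_congr (d N : ℕ) (ρ : Matrix (Idx d N) (Idx d N) ℂ)
    (hD : ρ = PD d N * ρ * PD d N) {a b a' b' : Idx d N}
    (ha : wsum a = wsum a') (hb : wsum b = wsum b') : ρ a b = ρ a' b' := by
  rw [hD]
  simp only [Matrix.mul_apply]
  refine Finset.sum_congr rfl fun l _ => ?_
  have h2 : PD d N l b = PD d N l b' := by simp [PD, hb]
  rw [h2]
  congr 1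
  refine Finset.sum_congr rfl fun k _ => ?_
  have h1 : PD d N a k = PD d N a' k := by simp [PD, ha]
  rw [h1]

/-- The coefficient vector of each product state in a positive decomposition of a
D-symmetric state is constant on weight levels. -/
lemma v_const (d N n : ℕ) (lam : Fin n → ℝ) (ξ : Fin n → (Fin d → ℂ))
    (hlam : ∀ α, 0 < lam α)
    (ρ : Matrix (Idx d N) (Idx d N) ℂ)
    (hρ : ρ = ∑ α, (lam α : ℂ) • prodProj (fun _ : Fin N => ξ α))
    (hD : ρ = PD d N * ρ * PD d N)
    (α : Fin n) {i i' : Idx d N} (h : wsum i = wsum i') :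
    (∏ j, ξ α (i j)) = ∏ j, ξ α (i' j) := by
  set v : Fin n → Idx d N → ℂ := fun β a => ∏ j, ξ β (a j) with hv
  have hent : ∀ a b : Idx d N, ρ a b = ∑ β, (lam β : ℂ) * (v β a * conj (v β b)) := by
    intro a b
    rw [hρ]
    simp only [Matrix.sum_apply, Matrix.smul_apply, prodProj, Matrix.of_apply, smul_eq_mul]
    refine Finset.sum_congr rfl fun β _ => ?_
    rw [Finset.prod_mul_distrib]
    simp [hv, map_prod]
  have h1 : ρ i i' = ρ i i := rho_entry_congr d N ρ hD rfl h.symm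
  have h2 : ρ i' i = ρ i i := rho_entry_congr d N ρ hD h.symm rfl
  have h3 : ρ i' i' = ρ i i := rho_entry_congr d N ρ hD h.symm h.symm
  have key : ∑ β, (lam β : ℂ) * ((v β i - v β i') * conj (v β i - v β i'))
      = ρ i i - ρ i i' - ρ i' i + ρ i' i' := by
    rw [hent i i, hent i i', hent i' i, hent i' i',
      ← Finset.sum_sub_distrib, ← Finset.sum_sub_distrib, ← Finset.sum_add_distrib]
    refine Finset.sum_congr rfl fun β _ => ?_
    simp only [map_sub]
    ring
  rw [h1, h2, h3] at key
  have key0 : ∑ β, (lam β : ℂ) * ((v β i - v β i') * conj (v β i - v β i')) = 0 := by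
    rw [key]; ring
  have keyR : ∑ β, lam β * Complex.normSq (v β i - v β i') = 0 := by
    have : ((∑ β, lam β * Complex.normSq (v β i - v β i') : ℝ) : ℂ) = 0 := by
      rw [← key0]
      push_cast
      refine Finset.sum_congr rfl fun β _ => ?_
      rw [Complex.mul_conj]
    exact_mod_cast this
  have hnn : ∀ β ∈ Finset.univ, 0 ≤ lam β * Complex.normSq (v β i - v β i') :=
    fun β _ => mul_nonneg (hlam β).le (Complex.normSq_nonneg _)
  have := (Finset.sum_eq_zero_iff_of_nonneg hnn).mp keyR α (Finset.mem_univ α)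
  have hns : Complex.normSq (v α i - v α i') = 0 := by
    rcases mul_eq_zero.mp this with h' | h'
    · exact absurd h' (ne_of_gt (hlam α))
    · exact h'
  have := Complex.normSq_eq_zero.mp hns
  have := sub_eq_zero.mp this
  simpa [hv] using this

/-- From constancy on weight levels derive the pair relation. -/
lemma pair_of_const (d N : ℕ) (hd : 2 ≤ d) (hN : 2 ≤ N) (ξ : Fin d → ℂ)
    (t0 : Fin d) (ht0 : ξ t0 ≠ 0)
    (hconst : ∀ i i' : Idx d N, wsum i = wsum i' → (∏ j, ξ (i j)) = ∏ j, ξ (i' j)) :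
    ∀ a b c e : Fin d, (a : ℕ) + b = (c : ℕ) + e → ξ a * ξ b = ξ c * ξ e := by
  intro a b c e hsum
  have h0 : (0 : ℕ) < N := by omega
  have h1 : (1 : ℕ) < N := by omega
  set j0 : Fin N := ⟨0, h0⟩ with hj0
  set j1 : Fin N := ⟨1, h1⟩ with hj1
  have hne : j1 ≠ j0 := by simp [hj0, hj1, Fin.ext_iff]
  set f : Fin d → Fin d → Idx d N :=
    fun a b j => if j = j0 then a else if j = j1 then b else t0 with hf
  set s : Finset (Fin N) := (Finset.univ.erase j0).erase j1 with hs
  have hmem1 : j1 ∈ Finset.univ.erase j0 := Finset.mem_erase.mpr ⟨hne, Finset.mem_univ _⟩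
  have hsplit_sum : ∀ a b : Fin d,
      wsum (f a b) = (a : ℕ) + ((b : ℕ) + ∑ j ∈ s, ((f a b j : Fin d) : ℕ)) := by
    intro a b
    show ∑ j, ((f a b j : Fin d) : ℕ) = _
    rw [← Finset.add_sum_erase _ _ (Finset.mem_univ j0),
      ← Finset.add_sum_erase _ _ hmem1]
    simp [hf, hne, hs]
  have hsplit_prod : ∀ a b : Fin d,
      (∏ j, ξ (f a b j)) = ξ a * (ξ b * ∏ j ∈ s, ξ (f a b j)) := by
    intro a b
    rw [← Finset.mul_prod_erase _ _ (Finset.mem_univ j0),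
      ← Finset.mul_prod_erase _ _ hmem1]
    simp [hf, hne, hs]
  have hrest : ∀ a b : Fin d, ∀ j ∈ s, f a b j = t0 := by
    intro a b j hj
    rcases Finset.mem_erase.mp hj with ⟨hj1', hj'⟩
    rcases Finset.mem_erase.mp hj' with ⟨hj0', _⟩
    simp [hf, hj0', hj1']
  have hrest_sum : ∀ a b : Fin d, ∑ j ∈ s, ((f a b j : Fin d) : ℕ) = ∑ j ∈ s, (t0 : ℕ) :=
    fun a b => Finset.sum_congr rfl fun j hj => by rw [hrest a b j hj]
  have hrest_prod : ∀ a b : Fin d, (∏ j ∈ s, ξ (f a b j)) = ξ t0 ^ s.card := by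
    intro a b
    rw [Finset.prod_congr rfl fun j hj => by rw [hrest a b j hj]]
    exact Finset.prod_const _
  have hws : wsum (f a b) = wsum (f c e) := by
    rw [hsplit_sum, hsplit_sum, hrest_sum, hrest_sum]
    omega
  have := hconst (f a b) (f c e) hws
  rw [hsplit_prod, hsplit_prod, hrest_prod, hrest_prod] at this
  have hp : (ξ t0 ^ s.card) ≠ 0 := pow_ne_zero _ ht0
  have : (ξ a * ξ b) * ξ t0 ^ s.card = (ξ c * ξ e) * ξ t0 ^ s.card := by
    rw [mul_assoc, mul_assoc]; exact this
  exact mul_right_cancel₀ hp this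

/-- Classification of a unit vector satisfying the pair relation. -/
lemma classify (d : ℕ) (hd : 2 ≤ d) (ξ : Fin d → ℂ)
    (hunit : ∑ x, Complex.normSq (ξ x) = 1)
    (hpair : ∀ a b c e : Fin d, (a : ℕ) + b = (c : ℕ) + e → ξ a * ξ b = ξ c * ξ e) :
    (Matrix.vecMulVec ξ (star ξ) = Matrix.vecMulVec (topVec d) (star (topVec d))) ∨
    ∃ z : ℂ, Matrix.vecMulVec ξ (star ξ) = Matrix.vecMulVec (zeta d z) (star (zeta d z)) := by
  have hd0 : (0 : ℕ) < d := by omega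
  have hd1 : (1 : ℕ) < d := by omega
  set i0 : Fin d := ⟨0, hd0⟩ with hi0
  set i1 : Fin d := ⟨1, hd1⟩ with hi1
  by_cases h0 : ξ i0 = 0
  · -- all entries below d-1 vanish
    left
    have hzero : ∀ t : ℕ, t < d - 1 → ∀ ht : t < d, ξ ⟨t, ht⟩ = 0 := by
      intro t
      induction t using Nat.strong_induction_on with
      | _ t IH =>
        intro htd ht
        match t, htd, ht with
        | 0, _, _ => exact h0
        | (t+1), htd, ht =>
          have ht2 : t + 2 < d := by omega
          have htt : t < d := by omega
          have hp := hpair ⟨t+1, ht⟩ ⟨t+1, ht⟩ ⟨t, htt⟩ ⟨t+2, ht2⟩ (by simp; omega)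
          have h1 : ξ ⟨t, htt⟩ = 0 := IH t (by omega) (by omega) htt
          rw [h1, zero_mul] at hp
          exact mul_self_eq_zero.mp hp
    have hzero' : ∀ t : Fin d, (t : ℕ) ≠ d - 1 → ξ t = 0 := by
      intro t htne
      have := hzero t (by omega) t.isLt
      simpa using this
    set L : Fin d := ⟨d - 1, by omega⟩ with hL
    have hnorm : Complex.normSq (ξ L) = 1 := by
      rw [← hunit]
      rw [Finset.sum_eq_single L]
      · intro b _ hb
        rw [hzero' b (by simpa [Fin.ext_iff, hL] using hb), Complex.normSq_zero]
      · intro hb; exact absurd (Finset.mem_univ L) hb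
    ext i j
    simp only [Matrix.vecMulVec_apply, Pi.star_apply, topVec]
    by_cases hi : (i : ℕ) = d - 1
    · by_cases hj : (j : ℕ) = d - 1
      · have hiL : i = L := by simp [Fin.ext_iff, hL, hi]
        have hjL : j = L := by simp [Fin.ext_iff, hL, hj]
        rw [hiL, hjL]
        simp only [hL, if_pos rfl]
        rw [RCLike.star_def, Complex.mul_conj, hnorm]
        norm_num
      · rw [hzero' j hj]
        simp [hj]
    · rw [hzero' i hi]
      simp [hi]
  · -- geometric case
    right
    set z : ℂ := ξ i1 / ξ i0 with hz
    have hgeom : ∀ t : ℕ, ∀ ht : t < d, ξ ⟨t, ht⟩ = ξ i0 * z ^ t := by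
      intro t
      induction t using Nat.strong_induction_on with
      | _ t IH =>
        intro ht
        match t, ht with
        | 0, ht => simp [hi0]
        | 1, ht =>
          show ξ i1 = ξ i0 * z ^ 1
          rw [hz]; field_simp
        | (t+2), ht =>
          have ht1 : t + 1 < d := by omega
          have hp := hpair i0 ⟨t+2, ht⟩ i1 ⟨t+1, ht1⟩ (by simp [hi0, hi1]; omega)
          have e1 : ξ ⟨t+1, ht1⟩ = ξ i0 * z ^ (t+1) := IH (t+1) (by omega) ht1
          have e2 : ξ i1 = ξ i0 * z := by rw [hz]; field_simp
          rw [e1, e2] at hp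
          have : ξ i0 * ξ ⟨t+2, ht⟩ = ξ i0 * (ξ i0 * z ^ (t + 2)) := by
            rw [hp]; ring
          exact mul_left_cancel₀ h0 this
    refine ⟨z, ?_⟩
    set S : ℝ := ∑ j ∈ Finset.range d, Complex.normSq z ^ j with hS
    have hS1 : 1 ≤ S := by
      rw [hS]
      calc (1 : ℝ) = Complex.normSq z ^ 0 := by norm_num
        _ ≤ ∑ j ∈ Finset.range d, Complex.normSq z ^ j := by
          refine Finset.single_le_sum (fun j _ => pow_nonneg (Complex.normSq_nonneg z) j) ?_
          simp [hd0]
    have hSpos : 0 < S := by linarith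
    have hnormS : Complex.normSq (ξ i0) * S = 1 := by
      rw [← hunit, hS, Finset.mul_sum]
      rw [Finset.sum_range fun j => Complex.normSq (ξ i0) * Complex.normSq z ^ j]
      refine Finset.sum_congr rfl fun x _ => ?_
      have := hgeom (x : ℕ) x.isLt
      simp only [Fin.eta] at this
      rw [this, Complex.normSq_mul, map_pow]
    have hCz : Cz d z = S ^ (-(1/2 : ℝ)) := by
      rw [Cz, hS]
      congr 1
      refine Finset.sum_congr rfl fun j _ => ?_
      rw [pow_mul, Complex.sq_norm]
    have hCzsq : (Cz d z) ^ 2 = S⁻¹ := by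
      rw [hCz, ← Real.rpow_natCast (S ^ (-(1/2 : ℝ))) 2, ← Real.rpow_mul hSpos.le]
      norm_num
      exact Real.rpow_neg_one S
    have hn0 : Complex.normSq (ξ i0) = (Cz d z) ^ 2 := by
      rw [hCzsq]
      field_simp
      linarith [hnormS]
    have hkey : ξ i0 * conj (ξ i0) = (Cz d z : ℂ) * (Cz d z : ℂ) := by
      rw [Complex.mul_conj, hn0]
      push_cast
      ring
    ext i j
    simp only [Matrix.vecMulVec_apply, Pi.star_apply, zeta, RCLike.star_def]
    have hgi : ξ i = ξ i0 * z ^ (i : ℕ) := by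
      have := hgeom (i : ℕ) i.isLt; simpa using this
    have hgj : ξ j = ξ i0 * z ^ (j : ℕ) := by
      have := hgeom (j : ℕ) j.isLt; simpa using this
    rw [hgi, hgj]
    simp only [map_mul, map_pow]
    have hCr : conj ((Cz d z : ℂ)) = (Cz d z : ℂ) := Complex.conj_ofReal _
    rw [hCr]
    calc ξ i0 * z ^ (i : ℕ) * (conj (ξ i0) * conj z ^ (j : ℕ))
        = (ξ i0 * conj (ξ i0)) * (z ^ (i : ℕ) * conj z ^ (j : ℕ)) := by ring
      _ = ((Cz d z : ℂ) * (Cz d z : ℂ)) * (z ^ (i : ℕ) * conj z ^ (j : ℕ)) := by rw [hkey]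
      _ = (Cz d z : ℂ) * z ^ (i : ℕ) * ((Cz d z : ℂ) * conj z ^ (j : ℕ)) := by ring

end Aux

theorem stmt3 (d N : ℕ) (hd : 2 ≤ d) (hN : 2 ≤ N) (n : ℕ)
    (lam : Fin n → ℝ) (ξ : Fin n → (Fin d → ℂ))
    (hlam : ∀ α, 0 < lam α) (hunit : ∀ α, ∑ x, Complex.normSq (ξ α x) = 1)
    (ρ : Matrix (Idx d N) (Idx d N) ℂ)
    (hρ : ρ = ∑ α, (lam α : ℂ) • prodProj (fun _ : Fin N => ξ α))
    (hD : ρ = PD d N * ρ * PD d N) :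
    ∀ α : Fin n,
      Matrix.vecMulVec (ξ α) (star (ξ α)) = Matrix.vecMulVec (topVec d) (star (topVec d)) ∨
      ∃ z : ℂ, Matrix.vecMulVec (ξ α) (star (ξ α))
        = Matrix.vecMulVec (zeta d z) (star (zeta d z)) := by
  intro α
  have ht0 : ∃ t0 : Fin d, ξ α t0 ≠ 0 := by
    by_contra h
    push_neg at h
    have := hunit α
    simp [h] at this
  obtain ⟨t0, ht0⟩ := ht0
  have hconst : ∀ i i' : Idx d N, wsum i = wsum i' →
      (∏ j, ξ α (i j)) = ∏ j, ξ α (i' j) :=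
    fun i i' h => v_const d N n lam ξ hlam ρ hρ hD α h
  have hpair := pair_of_const d N hd hN (ξ α) t0 ht0 hconst
  exact classify d hd (ξ α) (hunit α) hpair

end DSym
end

section
/- Let n_1 = ⌊N(d−1)/2⌋ and let (s_k)_{k=0}^{n_1} be arbitrary complex numbers. Then V_(s) = Σ_{k,l=0}^{n_1} s_k s̄_l |R̃_{N,d;k+l}⟩⟨R̃_{N,d;k+l}| is an entanglement witness for the D-symmetric system: V_(s) is Hermitian, P_D V_(s) P_D = V_(s), and Tr(V_(s) σ) ≥ 0 for every pure fully separable D-symmetric state σ = (|ξ⟩⟨ξ|)^{⊗N} with σ = P_D σ P_D and ξ ∈ ℂ^d a unit vector. -/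
open scoped BigOperators ComplexConjugate ComplexOrder Matrix
namespace DSym

variable {d N : ℕ}

lemma Rtilde_conj (k : ℕ) (i : Idx d N) :
    (starRingEnd ℂ) (Rtilde d N k i) = Rtilde d N k i := by
  simp only [Rtilde, Pi.smul_apply, smul_eq_mul, Rvec, map_mul, map_inv₀, map_natCast]
  split <;> simp

lemma Ccount_ne_zero {k : ℕ} {i : Idx d N} (hi : wsum i = k) :
    (Ccount d N k : ℂ) ≠ 0 := by
  have : i ∈ Finset.univ.filter (fun j : Idx d N => wsum j = k) := by
    simp [Finset.mem_filter, hi]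
  have hc : Ccount d N k ≠ 0 := by
    simp only [Ccount]
    exact Finset.card_ne_zero_of_mem this
  exact_mod_cast hc

lemma PD_fix_left (m : ℕ) (i : Idx d N) :
    ∑ i', PD d N i i' * Rtilde d N m i' = Rtilde d N m i := by
  by_cases hi : wsum i = m
  · have hC : (Ccount d N m : ℂ) ≠ 0 := Ccount_ne_zero hi
    have hterm : ∀ i' : Idx d N, PD d N i i' * Rtilde d N m i' =
        if wsum i' = m then ((Ccount d N m : ℂ))⁻¹ * ((Ccount d N m : ℂ))⁻¹ else 0 := by
      intro i'
      by_cases h' : wsum i' = m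
      · simp [PD, Rtilde, Rvec, h', hi, Matrix.of_apply]
      · simp [PD, Rtilde, Rvec, h', Matrix.of_apply]
    rw [Finset.sum_congr rfl (fun i' _ => hterm i')]
    rw [Finset.sum_ite, Finset.sum_const, Finset.sum_const_zero, add_zero, nsmul_eq_mul]
    have hcard : ((Finset.univ.filter (fun i' : Idx d N => wsum i' = m)).card : ℂ)
        = (Ccount d N m : ℂ) := by simp [Ccount]
    rw [hcard, ← mul_assoc, mul_inv_cancel₀ hC, one_mul]
    simp [Rtilde, Rvec, hi]
  · have hterm : ∀ i' : Idx d N, PD d N i i' * Rtilde d N m i' = 0 := by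
      intro i'
      by_cases h' : wsum i' = m
      · have : wsum i ≠ wsum i' := by rw [h']; exact hi
        simp [PD, this, Matrix.of_apply]
      · simp [Rtilde, Rvec, h']
    rw [Finset.sum_congr rfl (fun i' _ => hterm i'), Finset.sum_const_zero]
    simp [Rtilde, Rvec, hi]

lemma PD_fix_right (m : ℕ) (j : Idx d N) :
    ∑ j', Rtilde d N m j' * PD d N j' j = Rtilde d N m j := by
  by_cases hj : wsum j = m
  · have hC : (Ccount d N m : ℂ) ≠ 0 := Ccount_ne_zero hj
    have hterm : ∀ j' : Idx d N, Rtilde d N m j' * PD d N j' j =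
        if wsum j' = m then ((Ccount d N m : ℂ))⁻¹ * ((Ccount d N m : ℂ))⁻¹ else 0 := by
      intro j'
      by_cases h' : wsum j' = m
      · have : wsum j' = wsum j := by rw [h', hj]
        simp [PD, Rtilde, Rvec, h', hj, this, Matrix.of_apply]
      · simp [PD, Rtilde, Rvec, h', Matrix.of_apply]
    rw [Finset.sum_congr rfl (fun j' _ => hterm j')]
    rw [Finset.sum_ite, Finset.sum_const, Finset.sum_const_zero, add_zero, nsmul_eq_mul]
    have hcard : ((Finset.univ.filter (fun j' : Idx d N => wsum j' = m)).card : ℂ)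
        = (Ccount d N m : ℂ) := by simp [Ccount]
    rw [hcard, ← mul_assoc, mul_inv_cancel₀ hC, one_mul]
    simp [Rtilde, Rvec, hj]
  · have hterm : ∀ j' : Idx d N, Rtilde d N m j' * PD d N j' j = 0 := by
      intro j'
      by_cases h' : wsum j' = m
      · have : wsum j' ≠ wsum j := by rw [h']; exact fun h => hj h.symm
        simp [PD, this, Matrix.of_apply]
      · simp [Rtilde, Rvec, h']
    rw [Finset.sum_congr rfl (fun j' _ => hterm j'), Finset.sum_const_zero]
    simp [Rtilde, Rvec, hj]
lemma PD_mul_proj (m : ℕ) :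
    PD d N * Matrix.vecMulVec (Rtilde d N m) (star (Rtilde d N m)) * PD d N
      = Matrix.vecMulVec (Rtilde d N m) (star (Rtilde d N m)) := by
  ext i j
  have hstar : ∀ x : Idx d N, (star (Rtilde d N m)) x = Rtilde d N m x := by
    intro x; simpa using Rtilde_conj (d := d) (N := N) m x
  simp only [Matrix.mul_apply, Matrix.vecMulVec_apply, hstar]
  calc ∑ j', (∑ i', PD d N i i' * (Rtilde d N m i' * Rtilde d N m j')) * PD d N j' j
      = ∑ j', (Rtilde d N m i * Rtilde d N m j') * PD d N j' j := by
        refine Finset.sum_congr rfl (fun j' _ => ?_)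
        congr 1
        calc ∑ i', PD d N i i' * (Rtilde d N m i' * Rtilde d N m j')
            = (∑ i', PD d N i i' * Rtilde d N m i') * Rtilde d N m j' := by
              rw [Finset.sum_mul]; exact Finset.sum_congr rfl (fun i' _ => by ring)
          _ = Rtilde d N m i * Rtilde d N m j' := by rw [PD_fix_left]
    _ = Rtilde d N m i * ∑ j', Rtilde d N m j' * PD d N j' j := by
        rw [Finset.mul_sum]; exact Finset.sum_congr rfl (fun j' _ => by ring)
    _ = Rtilde d N m i * Rtilde d N m j := by rw [PD_fix_right]

/-- canonical 3-value tuple -/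
def tup (d N : ℕ) (a b c : Fin d) : Idx d N :=
  fun j => if (j : ℕ) = 0 then a else if (j : ℕ) = 1 then b else c

lemma univ_split (hN : 2 ≤ N) :
    (Finset.univ : Finset (Fin N)) =
      insert (⟨0, by omega⟩ : Fin N) (insert (⟨1, by omega⟩ : Fin N)
        ((Finset.univ.erase ⟨0, by omega⟩).erase ⟨1, by omega⟩)) := by
  ext j
  simp only [Finset.mem_univ, Finset.mem_insert, Finset.mem_erase, true_iff, and_true]
  by_cases h0 : j = ⟨0, by omega⟩
  · exact Or.inl h0
  · by_cases h1 : j = ⟨1, by omega⟩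
    · exact Or.inr (Or.inl h1)
    · exact Or.inr (Or.inr ⟨h1, h0⟩)

lemma card_rest (hN : 2 ≤ N) :
    (((Finset.univ : Finset (Fin N)).erase ⟨0, by omega⟩).erase ⟨1, by omega⟩).card = N - 2 := by
  have h10 : (⟨1, by omega⟩ : Fin N) ≠ ⟨0, by omega⟩ := by simp [Fin.ext_iff]
  rw [Finset.card_erase_of_mem (by simp [Finset.mem_erase, h10]),
    Finset.card_erase_of_mem (Finset.mem_univ _)]
  simp [Finset.card_univ]; omega

lemma notmem01 (hN : 2 ≤ N) :
    (⟨0, by omega⟩ : Fin N) ∉ insert (⟨1, by omega⟩ : Fin N)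
      ((Finset.univ.erase (⟨0, by omega⟩ : Fin N)).erase ⟨1, by omega⟩) := by
  simp [Finset.mem_insert, Finset.mem_erase, Fin.ext_iff]

lemma notmem1 (hN : 2 ≤ N) :
    (⟨1, by omega⟩ : Fin N) ∉ (Finset.univ.erase (⟨0, by omega⟩ : Fin N)).erase ⟨1, by omega⟩ := by
  simp [Finset.mem_erase]

lemma wsum_tup (hN : 2 ≤ N) (a b c : Fin d) :
    wsum (tup d N a b c) = (a : ℕ) + (b : ℕ) + (N - 2) * (c : ℕ) := by
  unfold wsum
  rw [univ_split hN, Finset.sum_insert (notmem01 hN), Finset.sum_insert (notmem1 hN)]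
  have ha : tup d N a b c ⟨0, by omega⟩ = a := by simp [tup]
  have hb : tup d N a b c ⟨1, by omega⟩ = b := by simp [tup]
  have hc : ∀ j ∈ (Finset.univ.erase (⟨0, by omega⟩ : Fin N)).erase ⟨1, by omega⟩,
      ((tup d N a b c j : Fin d) : ℕ) = (c : ℕ) := by
    intro j hj
    simp only [Finset.mem_erase] at hj
    have hj0 : (j : ℕ) ≠ 0 := fun h => hj.2.1 (by simp [Fin.ext_iff, h])
    have hj1 : (j : ℕ) ≠ 1 := fun h => hj.1 (by simp [Fin.ext_iff, h])
    simp [tup, hj0, hj1]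
  rw [ha, hb, Finset.sum_congr rfl hc, Finset.sum_const, card_rest hN, smul_eq_mul]; ring

lemma prod_tup (hN : 2 ≤ N) (v : Fin d → ℝ) (a b c : Fin d) :
    ∏ j : Fin N, v (tup d N a b c j) = v a * v b * v c ^ (N - 2) := by
  rw [univ_split hN, Finset.prod_insert (notmem01 hN), Finset.prod_insert (notmem1 hN)]
  have ha : tup d N a b c ⟨0, by omega⟩ = a := by simp [tup]
  have hb : tup d N a b c ⟨1, by omega⟩ = b := by simp [tup]
  have hc : ∀ j ∈ (Finset.univ.erase (⟨0, by omega⟩ : Fin N)).erase ⟨1, by omega⟩,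
      v (tup d N a b c j) = v c := by
    intro j hj
    simp only [Finset.mem_erase] at hj
    have hj0 : (j : ℕ) ≠ 0 := fun h => hj.2.1 (by simp [Fin.ext_iff, h])
    have hj1 : (j : ℕ) ≠ 1 := fun h => hj.1 (by simp [Fin.ext_iff, h])
    simp [tup, hj0, hj1]
  rw [ha, hb, Finset.prod_congr rfl hc, Finset.prod_const, card_rest hN, mul_assoc]

lemma exists_coord_lt (i : Idx d N) (h : wsum i < N * (d - 1)) :
    ∃ c, (i c : ℕ) < d - 1 := by
  by_contra h'
  push_neg at h'
  have : N * (d - 1) ≤ wsum i := by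
    calc N * (d - 1) = ∑ _c : Fin N, (d - 1) := by
          rw [Finset.sum_const, Finset.card_univ, Fintype.card_fin, smul_eq_mul]
      _ ≤ ∑ c, (i c : ℕ) := Finset.sum_le_sum (fun c _ => h' c)
      _ = wsum i := rfl
  omega

lemma exists_wsum_eq (hd : 2 ≤ d) (m : ℕ) (hm : m ≤ N * (d - 1)) :
    ∃ i : Idx d N, wsum i = m := by
  induction m with
  | zero => exact ⟨fun _ => ⟨0, by omega⟩, by simp [wsum]⟩
  | succ m ih =>
    obtain ⟨i, hi⟩ := ih (by omega)
    obtain ⟨c, hc⟩ := exists_coord_lt i (by omega)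
    refine ⟨Function.update i c ⟨(i c : ℕ) + 1, by omega⟩, ?_⟩
    have key : ∀ j, ((Function.update i c (⟨(i c : ℕ) + 1, by omega⟩ : Fin d)) j : ℕ)
        = Function.update (fun j' => ((i j' : ℕ))) c ((i c : ℕ) + 1) j := by
      intro j
      by_cases h : j = c <;> simp [Function.update, h]
    unfold wsum
    rw [Finset.sum_congr rfl (fun j _ => key j),
      Finset.sum_update_of_mem (Finset.mem_univ c)]
    have : wsum i = (i c : ℕ) + ∑ j ∈ Finset.univ \ {c}, (i j : ℕ) := by
      unfold wsum
      exact Finset.sum_eq_add_sum_sdiff_singleton_of_mem (Finset.mem_univ c) _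
    omega
lemma geomA (hd : 2 ≤ d) (hN : 2 ≤ N) (u : Fin d → ℝ) (H : ℕ → ℝ)
    (hW : ∀ i : Idx d N, ∏ c, u (i c) = H (wsum i))
    (h0 : u ⟨0, by omega⟩ ≠ 0) :
    ∀ x : Fin d, u x = u ⟨0, by omega⟩ * (u ⟨1, by omega⟩ / u ⟨0, by omega⟩) ^ (x : ℕ) := by
  set u0 := u ⟨0, by omega⟩ with hu0
  set u1 := u ⟨1, by omega⟩ with hu1
  set r := u1 / u0 with hr
  suffices h : ∀ n (hn : n < d), u ⟨n, hn⟩ = u0 * r ^ n by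
    intro x
    have := h (x : ℕ) x.isLt
    simpa using this
  intro n
  induction n with
  | zero => intro hn; simp [hu0]
  | succ n ih =>
    intro hn
    have hn' : n < d := by omega
    have e1 := hW (tup d N ⟨n + 1, hn⟩ ⟨0, by omega⟩ ⟨0, by omega⟩)
    have e2 := hW (tup d N ⟨n, hn'⟩ ⟨1, by omega⟩ ⟨0, by omega⟩)
    rw [prod_tup hN, wsum_tup hN] at e1 e2
    simp only at e1 e2
    have hw : (n + 1) + 0 + (N - 2) * 0 = n + 1 + (N - 2) * 0 := by omega
    rw [hw] at e1
    have e3 : u ⟨n + 1, hn⟩ * u0 * u0 ^ (N - 2) = u ⟨n, hn'⟩ * u1 * u0 ^ (N - 2) := by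
      rw [e1, e2]
    have e4 : u ⟨n + 1, hn⟩ * u0 = u ⟨n, hn'⟩ * u1 :=
      mul_right_cancel₀ (pow_ne_zero _ h0) e3
    rw [ih hn'] at e4
    have : u ⟨n + 1, hn⟩ = u0 * r ^ n * u1 / u0 := by
      field_simp at e4 ⊢
      linarith [e4]
    rw [this, pow_succ, hr]
    field_simp
lemma caseB (hd : 2 ≤ d) (hN : 2 ≤ N) (u : Fin d → ℝ) (H : ℕ → ℝ)
    (hW : ∀ i : Idx d N, ∏ c, u (i c) = H (wsum i))
    (h0 : u ⟨0, by omega⟩ = 0) :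
    ∀ x : Fin d, (x : ℕ) < d - 1 → u x = 0 := by
  suffices h : ∀ n, ∀ (hn : n < d), n < d - 1 → u ⟨n, hn⟩ = 0 by
    intro x hx
    have := h (x : ℕ) x.isLt hx
    simpa using this
  intro n
  induction n using Nat.strong_induction_on with
  | _ n ih =>
    intro hn hn1
    rcases Nat.eq_zero_or_pos n with h | hpos
    · subst h; exact h0
    · have hnp : n - 1 < d := by omega
      have hnn : n + 1 < d := by omega
      have e1 := hW (tup d N ⟨n + 1, hnn⟩ ⟨n - 1, hnp⟩ ⟨n, hn⟩)
      have e2 := hW (tup d N ⟨n, hn⟩ ⟨n, hn⟩ ⟨n, hn⟩)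
      rw [prod_tup hN, wsum_tup hN] at e1 e2
      simp only at e1 e2
      have hw : (n + 1) + (n - 1) + (N - 2) * n = n + n + (N - 2) * n := by omega
      rw [hw] at e1
      have hprev : u ⟨n - 1, hnp⟩ = 0 := ih (n - 1) (by omega) hnp (by omega)
      rw [hprev] at e1
      have : u ⟨n, hn⟩ * u ⟨n, hn⟩ * u ⟨n, hn⟩ ^ (N - 2) = 0 := by
        rw [e2, ← e1]; ring
      have hp : u ⟨n, hn⟩ ^ N = 0 := by
        rw [show N = 1 + 1 + (N - 2) by omega, pow_add, pow_add, pow_one]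
        exact this
      exact pow_eq_zero_iff (by omega) |>.mp hp

lemma exists_f (hd : 2 ≤ d) (hN : 2 ≤ N) (u : Fin d → ℝ) (hu : ∀ x, 0 ≤ u x)
    (H : ℕ → ℝ) (hH : ∀ m, 0 ≤ H m)
    (hW : ∀ i : Idx d N, ∏ c, u (i c) = H (wsum i))
    (n1 : ℕ) (hn1 : n1 = N * (d - 1) / 2) :
    ∃ f : ℕ → ℝ, ∀ k, k ≤ n1 → ∀ l, l ≤ n1 → H (k + l) = f k * f l := by
  have h2n1 : 2 * n1 ≤ N * (d - 1) := by omega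
  by_cases h0 : u ⟨0, by omega⟩ = 0
  · refine ⟨fun k => if k = n1 then Real.sqrt (H (n1 + n1)) else 0, fun k hk l hl => ?_⟩
    by_cases hkl : k = n1 ∧ l = n1
    · obtain ⟨rfl, rfl⟩ := hkl
      simp [Real.mul_self_sqrt (hH _)]
    · have hlt : k + l < n1 + n1 := by
        rcases not_and_or.mp hkl with h | h <;> omega
      have hle : k + l ≤ N * (d - 1) := by omega
      obtain ⟨i, hi⟩ := exists_wsum_eq hd (k + l) hle
      obtain ⟨c, hc⟩ := exists_coord_lt i (by omega)
      have hz : u (i c) = 0 := caseB hd hN u H hW h0 (i c) hc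
      have : H (k + l) = 0 := by
        rw [← hi, ← hW i]
        exact Finset.prod_eq_zero (Finset.mem_univ c) hz
      rw [this]
      rcases not_and_or.mp hkl with h | h <;> simp [h]
  · have hgeom := geomA hd hN u H hW h0
    set u0 := u ⟨0, by omega⟩ with hu0
    set r := u ⟨1, by omega⟩ / u0 with hr
    have hH0 : H 0 = u0 ^ N := by
      have h := hW (fun _ : Fin N => ⟨0, by omega⟩)
      have hws : wsum (fun _ : Fin N => (⟨0, by omega⟩ : Fin d)) = 0 := by simp [wsum]
      rw [hws] at h
      rw [← h, Finset.prod_const, Finset.card_univ, Fintype.card_fin]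
    have hHm : ∀ m, m ≤ N * (d - 1) → H m = u0 ^ N * r ^ m := by
      intro m hm
      obtain ⟨i, hi⟩ := exists_wsum_eq hd m hm
      rw [← hi, ← hW i]
      calc ∏ c, u (i c) = ∏ c, (u0 * r ^ ((i c : Fin d) : ℕ)) :=
            Finset.prod_congr rfl (fun c _ => hgeom (i c))
        _ = u0 ^ N * r ^ (wsum i) := by
            rw [Finset.prod_mul_distrib, Finset.prod_const, Finset.card_univ,
              Fintype.card_fin, Finset.prod_pow_eq_pow_sum]
            rfl
    refine ⟨fun k => Real.sqrt (H 0) * r ^ k, fun k hk l hl => ?_⟩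
    have hkl : k + l ≤ N * (d - 1) := by omega
    have hs : Real.sqrt (H 0) * Real.sqrt (H 0) = H 0 := Real.mul_self_sqrt (hH 0)
    calc H (k + l) = u0 ^ N * r ^ (k + l) := hHm (k + l) hkl
      _ = H 0 * (r ^ k * r ^ l) := by rw [hH0, pow_add]
      _ = (Real.sqrt (H 0) * r ^ k) * (Real.sqrt (H 0) * r ^ l) := by
            rw [show (Real.sqrt (H 0) * r ^ k) * (Real.sqrt (H 0) * r ^ l)
              = (Real.sqrt (H 0) * Real.sqrt (H 0)) * (r ^ k * r ^ l) from by ring, hs]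
theorem stmt5 (d N : ℕ) (hd : 2 ≤ d) (hN : 2 ≤ N) (s : ℕ → ℂ)
    (n1 : ℕ) (hn1 : n1 = N * (d - 1) / 2)
    (V : Matrix (Idx d N) (Idx d N) ℂ)
    (hV : V = ∑ k ∈ Finset.range (n1 + 1), ∑ l ∈ Finset.range (n1 + 1),
      (s k * conj (s l)) •
        Matrix.vecMulVec (Rtilde d N (k + l)) (star (Rtilde d N (k + l)))) :
    V.IsHermitian ∧ PD d N * V * PD d N = V ∧
      ∀ σ : Matrix (Idx d N) (Idx d N) ℂ, PureDSymmProd σ → 0 ≤ (V * σ).trace := by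
  have hRt : ∀ (m : ℕ) (x : Idx d N), (starRingEnd ℂ) (Rtilde d N m x) = Rtilde d N m x :=
    fun m x => Rtilde_conj m x
  have happ : ∀ i j : Idx d N, V i j = ∑ k ∈ Finset.range (n1 + 1),
      ∑ l ∈ Finset.range (n1 + 1),
        s k * conj (s l) * (Rtilde d N (k + l) i * Rtilde d N (k + l) j) := by
    intro i j
    rw [hV]
    simp only [Matrix.sum_apply, Matrix.smul_apply, Matrix.vecMulVec_apply, smul_eq_mul,
      Pi.star_apply, Complex.star_def, hRt]
  refine ⟨?_, ?_, ?_⟩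
  · -- Hermitian
    show Vᴴ = V
    ext i j
    rw [Matrix.conjTranspose_apply, happ i j, happ j i, Complex.star_def]
    simp only [map_sum]
    rw [Finset.sum_comm]
    refine Finset.sum_congr rfl fun k _ => Finset.sum_congr rfl fun l _ => ?_
    simp only [map_mul, Complex.conj_conj, hRt]
    rw [Nat.add_comm l k]
    ring
  · -- P_D V P_D = V
    rw [hV, Matrix.mul_sum, Matrix.sum_mul]
    refine Finset.sum_congr rfl fun k _ => ?_
    rw [Matrix.mul_sum, Matrix.sum_mul]
    refine Finset.sum_congr rfl fun l _ => ?_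
    rw [Matrix.mul_smul, Matrix.smul_mul, PD_mul_proj]
  · -- positivity on pure D-symmetric product states
    intro σ hσ
    obtain ⟨ξ, hξ, hσeq, hσsym⟩ := hσ
    set A : Idx d N → ℂ := fun i => ∏ c, ξ (i c) with hA
    set T : ℕ → ℂ := fun m => ∑ j, Rtilde d N m j * A j with hT
    have hσapp : ∀ i j : Idx d N, σ i j = A i * conj (A j) := by
      intro i j
      rw [hσeq]
      simp only [prodProj, Matrix.of_apply, hA]
      rw [Finset.prod_mul_distrib, map_prod]
    have L1 : ∀ (B : Idx d N → ℂ) (i : Idx d N),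
        ∑ i', PD d N i i' * B i' = ∑ i', Rtilde d N (wsum i) i' * B i' := by
      intro B i
      refine Finset.sum_congr rfl fun i' _ => ?_
      by_cases h : wsum i = wsum i'
      · simp [PD, Rtilde, Rvec, h, Matrix.of_apply]
      · have h' : ¬ wsum i' = wsum i := fun e => h e.symm
        simp [PD, Rtilde, Rvec, h, h', Matrix.of_apply]
    have L2 : ∀ (B : Idx d N → ℂ) (j : Idx d N),
        ∑ j', B j' * PD d N j' j = ∑ j', Rtilde d N (wsum j) j' * B j' := by
      intro B j
      refine Finset.sum_congr rfl fun j' _ => ?_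
      by_cases h : wsum j' = wsum j
      · simp [PD, Rtilde, Rvec, h, Matrix.of_apply, mul_comm]
      · simp [PD, Rtilde, Rvec, h, Matrix.of_apply]
    have hconjT : ∀ (m : ℕ), conj (T m) = ∑ j', Rtilde d N m j' * conj (A j') := by
      intro m
      rw [hT]
      simp only [map_sum, map_mul, hRt]
    have dagger : ∀ i j : Idx d N, A i * conj (A j) = T (wsum i) * conj (T (wsum j)) := by
      intro i j
      have h := congrFun (congrFun hσsym i) j
      have inner : ∀ j', (PD d N * σ) i j' = T (wsum i) * conj (A j') := by
        intro j'
        rw [Matrix.mul_apply, L1 (fun i' => σ i' j') i]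
        calc ∑ i', Rtilde d N (wsum i) i' * σ i' j'
            = (∑ i', Rtilde d N (wsum i) i' * A i') * conj (A j') := by
              rw [Finset.sum_mul]
              exact Finset.sum_congr rfl fun i' _ => by rw [hσapp]; ring
          _ = T (wsum i) * conj (A j') := by rw [hT]
      calc A i * conj (A j) = σ i j := (hσapp i j).symm
        _ = (PD d N * σ * PD d N) i j := h
        _ = T (wsum i) * conj (T (wsum j)) := by
            rw [Matrix.mul_apply, L2 (fun j' => (PD d N * σ) i j') j]
            calc ∑ j', Rtilde d N (wsum j) j' * (PD d N * σ) i j'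
                = T (wsum i) * ∑ j', Rtilde d N (wsum j) j' * conj (A j') := by
                  rw [Finset.mul_sum]
                  exact Finset.sum_congr rfl fun j' _ => by rw [inner j']; ring
              _ = T (wsum i) * conj (T (wsum j)) := by rw [hconjT]
    have hW : ∀ i : Idx d N, ∏ c, Complex.normSq (ξ (i c)) = Complex.normSq (T (wsum i)) := by
      intro i
      have h := dagger i i
      rw [Complex.mul_conj, Complex.mul_conj] at h
      have h2 : Complex.normSq (A i) = Complex.normSq (T (wsum i)) := Complex.ofReal_inj.mp h
      rw [← h2, hA]
      exact (map_prod Complex.normSq _ _).symm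
    obtain ⟨f, hf⟩ := exists_f hd hN (fun x => Complex.normSq (ξ x))
      (fun x => Complex.normSq_nonneg _) (fun m => Complex.normSq (T m))
      (fun m => Complex.normSq_nonneg _) hW n1 hn1
    have htr : (V * σ).trace = ∑ k ∈ Finset.range (n1 + 1), ∑ l ∈ Finset.range (n1 + 1),
        (s k * conj (s l)) * (T (k + l) * conj (T (k + l))) := by
      rw [hV, Matrix.sum_mul, Matrix.trace_sum]
      refine Finset.sum_congr rfl fun k _ => ?_
      rw [Matrix.sum_mul, Matrix.trace_sum]
      refine Finset.sum_congr rfl fun l _ => ?_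
      rw [Matrix.smul_mul, Matrix.trace_smul, smul_eq_mul]
      congr 1
      rw [Matrix.trace]
      calc ∑ i, (Matrix.vecMulVec (Rtilde d N (k + l)) (star (Rtilde d N (k + l))) * σ).diag i
          = ∑ i, ∑ jj, (Rtilde d N (k + l) i * Rtilde d N (k + l) jj) * (A jj * conj (A i)) := by
            refine Finset.sum_congr rfl fun i _ => ?_
            rw [Matrix.diag_apply, Matrix.mul_apply]
            refine Finset.sum_congr rfl fun jj _ => ?_
            rw [Matrix.vecMulVec_apply, hσapp, Pi.star_apply, Complex.star_def, hRt]
        _ = (∑ i, Rtilde d N (k + l) i * conj (A i)) * (∑ jj, Rtilde d N (k + l) jj * A jj) := by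
            rw [Finset.sum_mul_sum]
            exact Finset.sum_congr rfl fun i _ => Finset.sum_congr rfl fun jj _ => by ring
        _ = T (k + l) * conj (T (k + l)) := by
            rw [hconjT]
            exact mul_comm (∑ i, Rtilde d N (k + l) i * conj (A i)) (T (k + l))
    rw [htr]
    have hterm : ∀ k ∈ Finset.range (n1 + 1), ∀ l ∈ Finset.range (n1 + 1),
        (s k * conj (s l)) * (T (k + l) * conj (T (k + l)))
          = (s k * (f k : ℂ)) * conj (s l * (f l : ℂ)) := by
      intro k hk l hl
      rw [Complex.mul_conj,
        show Complex.normSq (T (k + l)) = f k * f l from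
          hf k (Nat.lt_succ_iff.mp (Finset.mem_range.mp hk)) l
            (Nat.lt_succ_iff.mp (Finset.mem_range.mp hl)),
        map_mul, Complex.conj_ofReal]
      push_cast
      ring
    rw [Finset.sum_congr rfl fun k hk => Finset.sum_congr rfl fun l hl => hterm k hk l hl]
    rw [← Finset.sum_mul_sum, ← map_sum, Complex.mul_conj]
    exact Complex.zero_le_real.mpr (Complex.normSq_nonneg _)

end DSym
end

section
/- If for a finite sequence (p_k)_{k=0}^{n} of real numbers the two Hankel matrices (p_{k+l})_{k,l=0}^{⌊n/2⌋} and (p_{k+l+1})_{k,l=0}^{⌊(n−1)/2⌋} are strictly positive definite, then (p_k)_{k=0}^{n} is a solution of the strict moment problem on [0,∞), i.e. there is a finite positive Borel measure σ on [0,∞) with p_k = ∫_0^∞ t^k dσ(t) for all k = 0,…,n. -/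
open scoped BigOperators ComplexConjugate ComplexOrder Matrix
namespace DSym

noncomputable section StrictMomentAux
open Polynomial MeasureTheory


/-- sum of squares of a multiset of polynomials -/
def sqs (m : Multiset (Polynomial ℝ)) : Polynomial ℝ := (m.map (· ^ 2)).sum

@[simp] lemma sqs_zero : sqs 0 = 0 := rfl

@[simp] lemma sqs_cons (A : Polynomial ℝ) (m : Multiset (Polynomial ℝ)) :
    sqs (A ::ₘ m) = A ^ 2 + sqs m := by simp [sqs]

lemma sqs_add (m n : Multiset (Polynomial ℝ)) : sqs (m + n) = sqs m + sqs n := by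
  simp [sqs]

lemma sqs_eval_nonneg (m : Multiset (Polynomial ℝ)) (t : ℝ) : 0 ≤ (sqs m).eval t := by
  induction m using Multiset.induction with
  | empty => simp
  | cons A m ih => simp only [sqs_cons, eval_add, eval_pow]; positivity

lemma sq_eval_le_sqs {A : Polynomial ℝ} {m : Multiset (Polynomial ℝ)} (hA : A ∈ m) (t : ℝ) :
    (A.eval t) ^ 2 ≤ (sqs m).eval t := by
  obtain ⟨m', rfl⟩ : ∃ m', m = A ::ₘ m' := ⟨m.erase A, (Multiset.cons_erase hA).symm⟩
  simp only [sqs_cons, eval_add, eval_pow]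
  nlinarith [sqs_eval_nonneg m' t]

lemma eq_zero_of_sqs_eq_zero {m : Multiset (Polynomial ℝ)} (h : sqs m = 0)
    {A : Polynomial ℝ} (hA : A ∈ m) : A = 0 := by
  have h2 : A ^ 2 = 0 := by
    have : ∀ t : ℝ, (A ^ 2).eval t = 0 := by
      intro t
      have h1 := sq_eval_le_sqs hA t
      rw [h] at h1
      simp only [eval_zero] at h1
      have h0 : (0:ℝ) ≤ (A.eval t) ^ 2 := sq_nonneg _
      simp only [eval_pow]
      linarith
    exact Polynomial.funext (fun t => by rw [this t, eval_zero])
  exact pow_eq_zero_iff (n := 2) (by norm_num) |>.mp h2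

lemma sqs_map_mul (A : Polynomial ℝ) (m : Multiset (Polynomial ℝ)) :
    sqs (m.map (A * ·)) = A ^ 2 * sqs m := by
  induction m using Multiset.induction with
  | empty => simp
  | cons B m ih =>
    simp only [Multiset.map_cons, Multiset.sum_cons, sqs_cons, ih, mul_pow]
    ring

lemma sqs_mul (m n : Multiset (Polynomial ℝ)) :
    sqs m * sqs n = sqs (m.bind fun A => n.map (A * ·)) := by
  induction m using Multiset.induction with
  | empty => simp
  | cons A m ih => simp [Multiset.cons_bind, sqs_add, sqs_map_mul, add_mul, ih]

/-- `q = Σ A² + X Σ B²` -/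
def SOSX (q : Polynomial ℝ) : Prop :=
  ∃ m1 m2 : Multiset (Polynomial ℝ), q = sqs m1 + X * sqs m2

lemma SOSX.mul {q r : Polynomial ℝ} (hq : SOSX q) (hr : SOSX r) : SOSX (q * r) := by
  obtain ⟨a, b, rfl⟩ := hq
  obtain ⟨c, d, rfl⟩ := hr
  refine ⟨(a.bind fun A => c.map (A * ·)) + ((b.bind fun A => d.map (A * ·)).map (X * ·)),
    (a.bind fun A => d.map (A * ·)) + (b.bind fun A => c.map (A * ·)), ?_⟩
  rw [sqs_add, sqs_add, sqs_map_mul, ← sqs_mul, ← sqs_mul, ← sqs_mul, ← sqs_mul]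
  ring_nf

lemma sosx_sq (A : Polynomial ℝ) : SOSX (A ^ 2) := ⟨{A}, 0, by simp [sqs]⟩

lemma sosx_const {c : ℝ} (hc : 0 ≤ c) : SOSX (C c) :=
  ⟨{C (Real.sqrt c)}, 0, by
    simp [sqs, ← C_pow, Real.sq_sqrt hc]⟩

lemma sosx_X_add_const {s : ℝ} (hs : 0 ≤ s) : SOSX (X + C s) :=
  ⟨{C (Real.sqrt s)}, {1}, by
    simp [sqs, ← C_pow, Real.sq_sqrt hs]; ring⟩

lemma sosx_add {q r : Polynomial ℝ} (hq : SOSX q) (hr : SOSX r) : SOSX (q + r) := by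
  obtain ⟨a, b, rfl⟩ := hq
  obtain ⟨c, d, rfl⟩ := hr
  exact ⟨a + c, b + d, by rw [sqs_add, sqs_add]; ring⟩


lemma sosx_zero : SOSX 0 := ⟨0, 0, by simp⟩

lemma eval_nonneg_limit (q : Polynomial ℝ) (c : ℝ) (h : ∀ t, c < t → 0 ≤ q.eval t) :
    0 ≤ q.eval c := by
  have hc : Filter.Tendsto (fun t => q.eval t) (nhdsWithin c (Set.Ioi c)) (nhds (q.eval c)) :=
    (q.continuous_aeval.continuousAt).continuousWithinAt
  refine ge_of_tendsto hc ?_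
  filter_upwards [self_mem_nhdsWithin] with t ht
  exact h t ht

lemma conj_root {q : Polynomial ℝ} {z : ℂ} (hz : (q.map (algebraMap ℝ ℂ)).IsRoot z) :
    (q.map (algebraMap ℝ ℂ)).IsRoot ((starRingEnd ℂ) z) := by
  have : (q.map (algebraMap ℝ ℂ)).eval ((starRingEnd ℂ) z)
      = (starRingEnd ℂ) ((q.map (algebraMap ℝ ℂ)).eval z) := by
    rw [Polynomial.eval_map, Polynomial.eval_map]
    rw [Polynomial.eval₂_eq_sum_range, Polynomial.eval₂_eq_sum_range, map_sum]
    refine Finset.sum_congr rfl fun i _ => ?_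
    simp [map_mul, map_pow, Complex.conj_ofReal]
  rw [Polynomial.IsRoot, this, hz.eq_zero, map_zero]

theorem sosx_of_nonneg : ∀ (d : ℕ) (q : Polynomial ℝ), q.natDegree ≤ d →
    (∀ t : ℝ, 0 ≤ t → 0 ≤ q.eval t) → SOSX q := by
  intro d
  induction d using Nat.strong_induction_on with
  | _ d ih =>
    intro q hd hq
    rcases eq_or_ne q 0 with rfl | hq0
    · exact sosx_zero
    rcases Nat.eq_zero_or_pos q.natDegree with hdeg | hdeg
    · rw [Polynomial.eq_C_of_natDegree_eq_zero hdeg]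
      exact sosx_const (by rw [Polynomial.coeff_zero_eq_eval_zero]; exact hq 0 le_rfl)
    by_cases hroot : ∃ r : ℝ, q.IsRoot r
    · obtain ⟨r, hr⟩ := hroot
      rcases le_or_gt r 0 with hr0 | hr0
      · -- root ≤ 0 : factor out (X - C r), q₁ still nonneg on [0,∞)
        obtain ⟨q₁, hfac⟩ := (dvd_iff_isRoot.mpr hr)
        have hq₁0 : q₁ ≠ 0 := by rintro rfl; simp [hfac] at hq0
        have hdq : q.natDegree = 1 + q₁.natDegree := by
          rw [hfac, natDegree_mul (X_sub_C_ne_zero r) hq₁0, natDegree_X_sub_C]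
        have hgt : ∀ t : ℝ, 0 ≤ t → r < t → 0 ≤ q₁.eval t := by
          intro t ht0 ht
          have h1 : q.eval t = (t - r) * q₁.eval t := by rw [hfac]; simp
          have hqt : 0 ≤ (t - r) * q₁.eval t := h1 ▸ hq t ht0
          exact nonneg_of_mul_nonneg_right hqt (by linarith)
        have hq₁ : ∀ t : ℝ, 0 ≤ t → 0 ≤ q₁.eval t := by
          intro t ht
          rcases lt_or_ge r t with h | h
          · exact hgt t ht h
          · have ht0 : t = 0 := le_antisymm (le_trans h hr0) ht
            have hr0' : r = 0 := le_antisymm hr0 (ht0 ▸ h)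
            rw [ht0]
            exact eval_nonneg_limit q₁ 0 (fun s hs => hgt s hs.le (hr0' ▸ hs))
        have hrec := ih q₁.natDegree (by omega) q₁ le_rfl hq₁
        have heq : X - C r = X + C (-r) := by rw [C_neg, sub_eq_add_neg]
        have hx : SOSX (X - C r) := heq ▸ sosx_X_add_const (by linarith)
        rw [hfac]
        exact hx.mul hrec
      · -- root > 0 : double root, factor out (X - C r)^2
        have hloc : IsLocalMin (fun t => q.eval t) r := by
          have : ∀ᶠ t in nhds r, 0 ≤ q.eval t := by
            filter_upwards [isOpen_Ioi.mem_nhds (show (0:ℝ) < r from hr0)] with t ht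
            exact hq t (le_of_lt ht)
          refine this.mono fun t ht => ?_
          simpa [hr.eq_zero] using ht
        have hder : q.derivative.IsRoot r := by
          have h := hloc.deriv_eq_zero
          rwa [Polynomial.deriv] at h
        obtain ⟨q₁, hfac⟩ := (dvd_iff_isRoot.mpr hr)
        have hq₁r : q₁.IsRoot r := by
          have hd1 : q.derivative = q₁ + (X - C r) * q₁.derivative := by
            rw [hfac, derivative_mul, derivative_X_sub_C, one_mul]
          have := hder
          rw [hd1] at this
          simpa [Polynomial.IsRoot] using this
        obtain ⟨q₂, hfac₂⟩ := (dvd_iff_isRoot.mpr hq₁r)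
        have hfacq : q = (X - C r) ^ 2 * q₂ := by rw [hfac, hfac₂]; ring
        have hq₂0 : q₂ ≠ 0 := by rintro rfl; simp [hfacq] at hq0
        have hdq : q.natDegree = 2 + q₂.natDegree := by
          rw [hfacq, natDegree_mul (pow_ne_zero 2 (X_sub_C_ne_zero r)) hq₂0,
            natDegree_pow, natDegree_X_sub_C]
        have hgt : ∀ t : ℝ, r < t → 0 ≤ q₂.eval t := by
          intro t ht
          have h1 : q.eval t = (t - r) ^ 2 * q₂.eval t := by rw [hfacq]; simp
          have hqt : 0 ≤ (t - r) ^ 2 * q₂.eval t := h1 ▸ hq t (by linarith)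
          exact nonneg_of_mul_nonneg_right hqt (pow_pos (by linarith) 2)
        have hq₂ : ∀ t : ℝ, 0 ≤ t → 0 ≤ q₂.eval t := by
          intro t ht
          rcases lt_or_ge r t with h | h
          · exact hgt t h
          · rcases eq_or_lt_of_le h with h' | h'
            · rw [h']; exact eval_nonneg_limit q₂ r hgt
            · -- 0 ≤ t < r : also fine? No! need nonneg only... use division by (t-r)^2 > 0
              have h1 : q.eval t = (t - r) ^ 2 * q₂.eval t := by rw [hfacq]; simp
              have hqt : 0 ≤ (t - r) ^ 2 * q₂.eval t := h1 ▸ hq t ht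
              have hne : t - r ≠ 0 := by linarith
              exact nonneg_of_mul_nonneg_right hqt (by positivity)
        have hrec := ih q₂.natDegree (by omega) q₂ le_rfl hq₂
        rw [hfacq]
        exact (sosx_sq (X - C r)).mul hrec
      -- no real root : quadratic complex factor
    · have hdeg' : 0 < (q.map (algebraMap ℝ ℂ)).degree := by
        rw [Polynomial.degree_map_eq_of_injective (algebraMap ℝ ℂ).injective,
          Polynomial.degree_eq_natDegree hq0]
        exact_mod_cast hdeg
      obtain ⟨z, hz⟩ := Complex.exists_root hdeg'
      have him : z.im ≠ 0 := by
        intro h0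
        refine hroot ⟨z.re, ?_⟩
        have hzre : z = algebraMap ℝ ℂ z.re := by
          apply Complex.ext <;> simp [h0]
        rw [hzre] at hz
        rw [Polynomial.IsRoot, ← (algebraMap ℝ ℂ).injective.eq_iff]
        rw [Polynomial.IsRoot.def, Polynomial.eval_map, Polynomial.eval₂_at_apply] at hz
        simpa using hz
      -- g = (X - re)^2 + im^2 divides q
      set g : Polynomial ℝ := (X - C z.re) ^ 2 + C (z.im ^ 2) with hg
      have hgmap : g.map (algebraMap ℝ ℂ) = (X - C z) * (X - C ((starRingEnd ℂ) z)) := by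
        have h1 : (X - C z) * (X - C ((starRingEnd ℂ) z))
            = X ^ 2 - C (z + (starRingEnd ℂ) z) * X + C (z * (starRingEnd ℂ) z) := by
          simp only [C_add, C_mul]; ring
        rw [h1, Complex.add_conj, Complex.mul_conj, Complex.normSq_apply]
        refine Polynomial.funext fun w => ?_
        simp only [hg, Polynomial.map_add, Polynomial.map_pow, Polynomial.map_sub,
          Polynomial.map_X, Polynomial.map_C, Complex.coe_algebraMap, eval_add, eval_sub,
          eval_pow, eval_mul, eval_X, eval_C]
        push_cast
        ring
      have hdvd : g ∣ q := by
        rw [← Polynomial.map_dvd_map' (algebraMap ℝ ℂ), hgmap]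
        have hcop : IsCoprime (X - C z) (X - C ((starRingEnd ℂ) z)) := by
          apply Polynomial.isCoprime_X_sub_C_of_isUnit_sub
          rw [isUnit_iff_ne_zero, sub_ne_zero]
          intro h
          exact him (Complex.conj_eq_iff_im.mp h.symm)
        refine hcop.mul_dvd (dvd_iff_isRoot.mpr hz) (dvd_iff_isRoot.mpr (conj_root hz))
      obtain ⟨q₂, hfac⟩ := hdvd
      have hgpos : ∀ t : ℝ, 0 < g.eval t := by
        intro t
        simp only [hg, eval_add, eval_pow, eval_sub, eval_X, eval_C]
        positivity
      have hg0 : g ≠ 0 := fun h => by simpa [h] using hgpos 0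
      have hq₂0 : q₂ ≠ 0 := by rintro rfl; simp [hfac] at hq0
      have hdg : g.natDegree = 2 := by
        rw [hg, natDegree_add_C, natDegree_pow, natDegree_X_sub_C]
      have hdq : q.natDegree = 2 + q₂.natDegree := by
        rw [hfac, natDegree_mul hg0 hq₂0, hdg]
      have hq₂ : ∀ t : ℝ, 0 ≤ t → 0 ≤ q₂.eval t := by
        intro t ht
        have h1 : q.eval t = g.eval t * q₂.eval t := by rw [hfac]; simp
        have hqt : 0 ≤ g.eval t * q₂.eval t := h1 ▸ hq t ht
        exact nonneg_of_mul_nonneg_right hqt (hgpos t)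
      have hrec := ih q₂.natDegree (by omega) q₂ le_rfl hq₂
      have hgsos : SOSX g := by
        rw [hg]
        exact sosx_add (sosx_sq _) (sosx_const (sq_nonneg _))
      rw [hfac]
      exact hgsos.mul hrec

lemma sqs_structure (m : Multiset (Polynomial ℝ)) :
    sqs m = 0 ∨ (0 < (sqs m).leadingCoeff ∧ Even (sqs m).natDegree ∧
      ∀ A ∈ m, 2 * A.natDegree ≤ (sqs m).natDegree) := by
  induction m using Multiset.induction with
  | empty => left; simp
  | cons A m IH =>
    by_cases hA : A = 0
    · subst hA
      rw [sqs_cons]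
      simp only [ne_eq, OfNat.ofNat_ne_zero, not_false_eq_true, zero_pow, zero_add]
      rcases IH with h0 | ⟨hl, he, hb⟩
      · left; exact h0
      · right
        refine ⟨hl, he, fun B hB => ?_⟩
        rcases Multiset.mem_cons.mp hB with rfl | hB
        · simp
        · exact hb B hB
    · have hA2 : A ^ 2 ≠ 0 := pow_ne_zero _ hA
      have hlA : 0 < (A ^ 2).leadingCoeff := by
        rw [leadingCoeff_pow]
        have := Polynomial.leadingCoeff_ne_zero.mpr hA
        positivity
      have hdA : (A ^ 2).natDegree = 2 * A.natDegree := by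
        rw [natDegree_pow]
      rw [sqs_cons]
      rcases IH with h0 | ⟨hl, he, hb⟩
      · rw [h0, add_zero]
        right
        refine ⟨hlA, by rw [hdA]; exact even_two_mul _, fun B hB => ?_⟩
        rcases Multiset.mem_cons.mp hB with rfl | hB
        · rw [hdA]
        · rw [eq_zero_of_sqs_eq_zero h0 hB]; simp
      · have hS0 : sqs m ≠ 0 := Polynomial.leadingCoeff_ne_zero.mp (ne_of_gt hl)
        rcases lt_trichotomy ((A ^ 2).natDegree) ((sqs m).natDegree) with hlt | heq | hgt
        · have hdeg := Polynomial.degree_lt_degree hlt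
          have hnd : (A ^ 2 + sqs m).natDegree = (sqs m).natDegree :=
            Polynomial.natDegree_eq_of_degree_eq (degree_add_eq_right_of_degree_lt hdeg)
          right
          refine ⟨?_, by rwa [hnd], fun B hB => ?_⟩
          · rwa [leadingCoeff_add_of_degree_lt hdeg]
          · rw [hnd]
            rcases Multiset.mem_cons.mp hB with rfl | hB
            · rw [← hdA]; exact hlt.le
            · exact hb B hB
        · have hdeg : (A ^ 2).degree = (sqs m).degree := by
            rw [degree_eq_natDegree hA2, degree_eq_natDegree hS0]
            exact_mod_cast heq
          have hsum : (A ^ 2).leadingCoeff + (sqs m).leadingCoeff ≠ 0 := by positivity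
          have hnd : (A ^ 2 + sqs m).natDegree = (sqs m).natDegree := by
            apply Polynomial.natDegree_eq_of_degree_eq
            rw [degree_add_eq_of_leadingCoeff_add_ne_zero hsum, hdeg, max_self]
          right
          refine ⟨?_, by rwa [hnd], fun B hB => ?_⟩
          · rw [leadingCoeff_add_of_degree_eq hdeg hsum]
            positivity
          · rw [hnd]
            rcases Multiset.mem_cons.mp hB with rfl | hB
            · rw [← hdA, heq]
            · exact hb B hB
        · have hdeg := Polynomial.degree_lt_degree hgt
          have hnd : (A ^ 2 + sqs m).natDegree = (A ^ 2).natDegree :=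
            Polynomial.natDegree_eq_of_degree_eq (degree_add_eq_left_of_degree_lt hdeg)
          right
          refine ⟨?_, ?_, fun B hB => ?_⟩
          · rwa [leadingCoeff_add_of_degree_lt' hdeg]
          · rw [hnd, hdA]; exact even_two_mul _
          · rw [hnd]
            rcases Multiset.mem_cons.mp hB with rfl | hB
            · rw [hdA]
            · exact le_trans (hb B hB) hgt.le

lemma sosx_degree_bounds {q : Polynomial ℝ} {m1 m2 : Multiset (Polynomial ℝ)}
    (hq : q = sqs m1 + X * sqs m2) :
    (∀ A ∈ m1, 2 * A.natDegree ≤ q.natDegree) ∧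
      (∀ B ∈ m2, B ≠ 0 → 2 * B.natDegree + 1 ≤ q.natDegree) := by
  rcases sqs_structure m1 with h1 | ⟨l1, e1, b1⟩ <;> rcases sqs_structure m2 with h2 | ⟨l2, e2, b2⟩
  · constructor
    · intro A hA; rw [eq_zero_of_sqs_eq_zero h1 hA]; simp
    · intro B hB hB0; exact absurd (eq_zero_of_sqs_eq_zero h2 hB) hB0
  · have hS2 : sqs m2 ≠ 0 := Polynomial.leadingCoeff_ne_zero.mp (ne_of_gt l2)
    have hnd : q.natDegree = 1 + (sqs m2).natDegree := by
      rw [hq, h1, zero_add, natDegree_mul X_ne_zero hS2, natDegree_X]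
    constructor
    · intro A hA; rw [eq_zero_of_sqs_eq_zero h1 hA]; simp
    · intro B hB _; have := b2 B hB; omega
  · have hnd : q.natDegree = (sqs m1).natDegree := by rw [hq, h2, mul_zero, add_zero]
    constructor
    · intro A hA; rw [hnd]; exact b1 A hA
    · intro B hB hB0; exact absurd (eq_zero_of_sqs_eq_zero h2 hB) hB0
  · have hS1 : sqs m1 ≠ 0 := Polynomial.leadingCoeff_ne_zero.mp (ne_of_gt l1)
    have hS2 : sqs m2 ≠ 0 := Polynomial.leadingCoeff_ne_zero.mp (ne_of_gt l2)
    have hT0 : X * sqs m2 ≠ 0 := mul_ne_zero X_ne_zero hS2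
    have hdT : (X * sqs m2).natDegree = 1 + (sqs m2).natDegree := by
      rw [natDegree_mul X_ne_zero hS2, natDegree_X]
    have hne : (sqs m1).natDegree ≠ (X * sqs m2).natDegree := by
      rw [hdT]
      intro h
      have : Odd (1 + (sqs m2).natDegree) := by
        rw [add_comm]; exact Even.add_one e2
      rw [← h] at this
      exact (Nat.not_odd_iff_even.mpr e1) this
    rcases lt_or_gt_of_ne hne with hlt | hgt
    · have hdeg := Polynomial.degree_lt_degree hlt
      have hnd : q.natDegree = (X * sqs m2).natDegree := by
        rw [hq]; exact Polynomial.natDegree_eq_of_degree_eq (degree_add_eq_right_of_degree_lt hdeg)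
      constructor
      · intro A hA; rw [hnd]; exact le_trans (b1 A hA) (le_trans hlt.le le_rfl)
      · intro B hB _; rw [hnd, hdT]; have := b2 B hB; omega
    · have hdeg := Polynomial.degree_lt_degree hgt
      have hnd : q.natDegree = (sqs m1).natDegree := by
        rw [hq]; exact Polynomial.natDegree_eq_of_degree_eq (degree_add_eq_left_of_degree_lt hdeg)
      constructor
      · intro A hA; rw [hnd]; exact b1 A hA
      · intro B hB _; rw [hnd]; have := b2 B hB; omega

/-- The moment functional `L f = Σ_{j ≤ n} f_j p_j`. -/
def Lf (n : ℕ) (p : ℕ → ℝ) : Polynomial ℝ →ₗ[ℝ] ℝ where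
  toFun f := ∑ j ∈ Finset.range (n + 1), f.coeff j * p j
  map_add' f g := by simp [coeff_add, add_mul, Finset.sum_add_distrib]
  map_smul' c f := by simp [coeff_smul, smul_eq_mul, Finset.mul_sum, mul_assoc]

lemma Lf_monomial (n : ℕ) (p : ℕ → ℝ) {i : ℕ} (c : ℝ) (hi : i ≤ n) :
    Lf n p (monomial i c) = c * p i := by
  simp only [Lf, LinearMap.coe_mk, AddHom.coe_mk, coeff_monomial]
  simp only [ite_mul, zero_mul]
  rw [Finset.sum_ite_eq (Finset.range (n + 1)) i (fun j => c * p j)]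
  simp [Finset.mem_range, Nat.lt_succ_of_le hi]

lemma Lf_shift (n : ℕ) (p : ℕ → ℝ) (e a b : ℕ) (A B : Polynomial ℝ)
    (hA : A.natDegree ≤ a) (hB : B.natDegree ≤ b) (hab : a + b + e ≤ n) :
    Lf n p (X ^ e * (A * B)) = ∑ k ∈ Finset.range (a + 1), ∑ l ∈ Finset.range (b + 1),
      A.coeff k * B.coeff l * p (k + l + e) := by
  have hexp : X ^ e * (A * B) = ∑ k ∈ Finset.range (a + 1), ∑ l ∈ Finset.range (b + 1),
      monomial (k + l + e) (A.coeff k * B.coeff l) := by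
    conv_lhs => rw [Polynomial.as_sum_range' A (a + 1) (Nat.lt_succ_of_le hA),
      Polynomial.as_sum_range' B (b + 1) (Nat.lt_succ_of_le hB)]
    rw [Finset.sum_mul_sum, Finset.mul_sum]
    refine Finset.sum_congr rfl fun k _ => ?_
    rw [Finset.mul_sum]
    refine Finset.sum_congr rfl fun l _ => ?_
    rw [monomial_mul_monomial, X_pow_eq_monomial, monomial_mul_monomial, one_mul, add_comm e (k + l)]
  rw [hexp, map_sum]
  refine Finset.sum_congr rfl fun k hk => ?_
  rw [map_sum]
  refine Finset.sum_congr rfl fun l hl => ?_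
  refine Lf_monomial n p _ ?_
  simp only [Finset.mem_range] at hk hl
  omega

section Hankel

variable {n : ℕ} {p : ℕ → ℝ}
variable (h0 : Matrix.PosDef (Matrix.of fun k l : Fin (n / 2 + 1) => p ((k : ℕ) + (l : ℕ))))
variable (h1 : Matrix.PosDef
    (Matrix.of fun k l : Fin ((n - 1) / 2 + 1) => p ((k : ℕ) + (l : ℕ) + 1)))

lemma Lf_sq_eq (A : Polynomial ℝ) (hdA : 2 * A.natDegree ≤ n) :
    Lf n p (A ^ 2) = dotProduct (fun k : Fin (n / 2 + 1) => A.coeff k)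
      ((Matrix.of fun k l : Fin (n / 2 + 1) => p ((k : ℕ) + (l : ℕ))).mulVec
        (fun k : Fin (n / 2 + 1) => A.coeff k)) := by
  have h2 : A ^ 2 = X ^ 0 * (A * A) := by ring
  have hle : A.natDegree ≤ n / 2 := by omega
  rw [h2, Lf_shift n p 0 (n / 2) (n / 2) A A hle hle (by omega)]
  simp only [dotProduct, Matrix.mulVec, Matrix.of_apply]
  rw [← Fin.sum_univ_eq_sum_range
    (fun k => ∑ l ∈ Finset.range (n / 2 + 1), A.coeff k * A.coeff l * p (k + l + 0)) (n / 2 + 1)]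
  refine Finset.sum_congr rfl fun k _ => ?_
  rw [Finset.mul_sum, ← Fin.sum_univ_eq_sum_range
    (fun l => A.coeff k * A.coeff l * p ((k : ℕ) + l + 0)) (n / 2 + 1)]
  refine Finset.sum_congr rfl fun l _ => ?_
  ring

lemma Lf_xsq_eq (B : Polynomial ℝ) (hdB : 2 * B.natDegree + 1 ≤ n) :
    Lf n p (X * B ^ 2) = dotProduct (fun k : Fin ((n - 1) / 2 + 1) => B.coeff k)
      ((Matrix.of fun k l : Fin ((n - 1) / 2 + 1) => p ((k : ℕ) + (l : ℕ) + 1)).mulVec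
        (fun k : Fin ((n - 1) / 2 + 1) => B.coeff k)) := by
  have h2 : X * B ^ 2 = X ^ 1 * (B * B) := by ring
  have hle : B.natDegree ≤ (n - 1) / 2 := by omega
  rw [h2, Lf_shift n p 1 ((n - 1) / 2) ((n - 1) / 2) B B hle hle (by omega)]
  simp only [dotProduct, Matrix.mulVec, Matrix.of_apply]
  rw [← Fin.sum_univ_eq_sum_range
    (fun k => ∑ l ∈ Finset.range ((n - 1) / 2 + 1), B.coeff k * B.coeff l * p (k + l + 1))
    ((n - 1) / 2 + 1)]
  refine Finset.sum_congr rfl fun k _ => ?_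
  rw [Finset.mul_sum, ← Fin.sum_univ_eq_sum_range
    (fun l => B.coeff k * B.coeff l * p ((k : ℕ) + l + 1)) ((n - 1) / 2 + 1)]
  refine Finset.sum_congr rfl fun l _ => ?_
  ring

include h0 in
lemma Lf_sq_pos {A : Polynomial ℝ} (hA : A ≠ 0) (hdA : 2 * A.natDegree ≤ n) :
    0 < Lf n p (A ^ 2) := by
  rw [Lf_sq_eq A hdA]
  set x : Fin (n / 2 + 1) → ℝ := fun k => A.coeff k with hx
  have hx0 : x ≠ 0 := by
    intro h
    have hdlt : A.natDegree < n / 2 + 1 := by omega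
    have := congrFun h ⟨A.natDegree, hdlt⟩
    simp only [hx, Pi.zero_apply] at this
    exact Polynomial.leadingCoeff_ne_zero.mpr hA this
  have := h0.dotProduct_mulVec_pos hx0
  simpa using this

include h1 in
lemma Lf_xsq_pos {B : Polynomial ℝ} (hB : B ≠ 0) (hdB : 2 * B.natDegree + 1 ≤ n) :
    0 < Lf n p (X * B ^ 2) := by
  rw [Lf_xsq_eq B hdB]
  set x : Fin ((n - 1) / 2 + 1) → ℝ := fun k => B.coeff k with hx
  have hx0 : x ≠ 0 := by
    intro h
    have hdlt : B.natDegree < (n - 1) / 2 + 1 := by omega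
    have := congrFun h ⟨B.natDegree, hdlt⟩
    simp only [hx, Pi.zero_apply] at this
    exact Polynomial.leadingCoeff_ne_zero.mpr hB this
  have := h1.dotProduct_mulVec_pos hx0
  simpa using this

end Hankel

section Key

variable {n : ℕ} {p : ℕ → ℝ}
variable (h0 : Matrix.PosDef (Matrix.of fun k l : Fin (n / 2 + 1) => p ((k : ℕ) + (l : ℕ))))
variable (h1 : Matrix.PosDef
    (Matrix.of fun k l : Fin ((n - 1) / 2 + 1) => p ((k : ℕ) + (l : ℕ) + 1)))

lemma sqs_eq_zero_of_all {m : Multiset (Polynomial ℝ)} (hc : ∀ A ∈ m, A = 0) : sqs m = 0 := by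
  induction m using Multiset.induction with
  | empty => simp
  | cons A m ih =>
    rw [sqs_cons, hc A (Multiset.mem_cons_self A m),
      ih fun B hB => hc B (Multiset.mem_cons_of_mem hB)]
    simp

lemma exists_ne_zero_of_sqs_ne_zero {m : Multiset (Polynomial ℝ)} (h : sqs m ≠ 0) :
    ∃ A ∈ m, A ≠ 0 := by
  by_contra hc
  push_neg at hc
  exact h (sqs_eq_zero_of_all hc)

include h0 in
lemma Lf_sqs_nonneg {m : Multiset (Polynomial ℝ)} (hb : ∀ A ∈ m, 2 * A.natDegree ≤ n) :
    0 ≤ Lf n p (sqs m) := by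
  induction m using Multiset.induction with
  | empty => simp
  | cons A m ih =>
    rw [sqs_cons, map_add]
    have h1 : 0 ≤ Lf n p (A ^ 2) := by
      rcases eq_or_ne A 0 with rfl | hA
      · simp
      · exact le_of_lt (Lf_sq_pos h0 hA (hb A (Multiset.mem_cons_self A m)))
    have h2 := ih fun B hB => hb B (Multiset.mem_cons_of_mem hB)
    linarith

include h1 in
lemma Lf_xsqs_nonneg {m : Multiset (Polynomial ℝ)} (hb : ∀ B ∈ m, B ≠ 0 → 2 * B.natDegree + 1 ≤ n) :
    0 ≤ Lf n p (X * sqs m) := by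
  induction m using Multiset.induction with
  | empty => simp
  | cons B m ih =>
    rw [sqs_cons, mul_add, map_add]
    have hB : 0 ≤ Lf n p (X * B ^ 2) := by
      rcases eq_or_ne B 0 with rfl | hB
      · simp
      · exact le_of_lt (Lf_xsq_pos h1 hB (hb B (Multiset.mem_cons_self B m) hB))
    have h2 := ih fun C hC hC0 => hb C (Multiset.mem_cons_of_mem hC) hC0
    linarith

include h0 h1 in
theorem Lf_pos_of_nonneg {q : Polynomial ℝ} (hq0 : q ≠ 0) (hdq : q.natDegree ≤ n)
    (hq : ∀ t : ℝ, 0 ≤ t → 0 ≤ q.eval t) : 0 < Lf n p q := by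
  obtain ⟨m1, m2, hrep⟩ := sosx_of_nonneg q.natDegree q le_rfl hq
  obtain ⟨hb1, hb2⟩ := sosx_degree_bounds hrep
  have hb1' : ∀ A ∈ m1, 2 * A.natDegree ≤ n := fun A hA => le_trans (hb1 A hA) hdq
  have hb2' : ∀ B ∈ m2, B ≠ 0 → 2 * B.natDegree + 1 ≤ n :=
    fun B hB hB0 => le_trans (hb2 B hB hB0) hdq
  rw [hrep, map_add]
  -- one of the parts is nonzero
  have hcase : sqs m1 ≠ 0 ∨ sqs m2 ≠ 0 := by
    by_contra hc
    push_neg at hc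
    apply hq0
    rw [hrep, hc.1, hc.2, mul_zero, add_zero]
  have hge1 := Lf_sqs_nonneg h0 hb1'
  have hge2 := Lf_xsqs_nonneg h1 hb2'
  rcases hcase with hcs | hcs
  · obtain ⟨A, hAm, hA⟩ := exists_ne_zero_of_sqs_ne_zero hcs
    obtain ⟨m1', rfl⟩ : ∃ m', m1 = A ::ₘ m' := ⟨m1.erase A, (Multiset.cons_erase hAm).symm⟩
    have hpos := Lf_sq_pos h0 hA (hb1' A (Multiset.mem_cons_self A m1'))
    have hrest := Lf_sqs_nonneg h0 (fun B hB => hb1' B (Multiset.mem_cons_of_mem hB))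
    rw [sqs_cons, map_add] at hge1 ⊢
    linarith
  · obtain ⟨B, hBm, hB⟩ := exists_ne_zero_of_sqs_ne_zero hcs
    obtain ⟨m2', rfl⟩ : ∃ m', m2 = B ::ₘ m' := ⟨m2.erase B, (Multiset.cons_erase hBm).symm⟩
    have hpos := Lf_xsq_pos h1 hB (hb2' B (Multiset.mem_cons_self B m2') hB)
    have hrest := Lf_xsqs_nonneg h1 (fun C hC hC0 => hb2' C (Multiset.mem_cons_of_mem hC) hC0)
    rw [sqs_cons, mul_add, map_add] at hge2 ⊢
    linarith

end Key

section Geometry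

variable (n : ℕ)

/-- The moment curve vector `(1, t, …, tⁿ)`. -/
def momVec (t : ℝ) : Fin (n + 1) → ℝ := fun k => t ^ (k : ℕ)

/-- The cone of moment vectors of finitely atomic measures on `[0,∞)`. -/
def momCone : Set (Fin (n + 1) → ℝ) :=
  {x | ∃ (m : ℕ) (w : Fin m → ℝ) (t : Fin m → ℝ), (∀ i, 0 ≤ w i) ∧ (∀ i, 0 ≤ t i) ∧
    ∀ k : Fin (n + 1), x k = ∑ i, w i * t i ^ (k : ℕ)}

variable {n}

lemma zero_mem_momCone : (0 : Fin (n + 1) → ℝ) ∈ momCone n :=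
  ⟨0, ![], ![], fun i => i.elim0, fun i => i.elim0, fun k => by simp⟩

lemma momVec_mem_momCone {t : ℝ} (ht : 0 ≤ t) : momVec n t ∈ momCone n :=
  ⟨1, ![1], ![t], fun i => by fin_cases i <;> norm_num,
    fun i => by fin_cases i <;> simpa, fun k => by simp [momVec]⟩

lemma smul_mem_momCone {c : ℝ} (hc : 0 ≤ c) {x : Fin (n + 1) → ℝ} (hx : x ∈ momCone n) :
    c • x ∈ momCone n := by
  obtain ⟨m, w, t, hw, ht, hx⟩ := hx
  refine ⟨m, fun i => c * w i, t, fun i => mul_nonneg hc (hw i), ht, fun k => ?_⟩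
  simp only [Pi.smul_apply, smul_eq_mul, hx k, Finset.mul_sum]
  exact Finset.sum_congr rfl fun i _ => by ring

lemma add_mem_momCone {x y : Fin (n + 1) → ℝ} (hx : x ∈ momCone n) (hy : y ∈ momCone n) :
    x + y ∈ momCone n := by
  obtain ⟨m1, w1, t1, hw1, ht1, hx⟩ := hx
  obtain ⟨m2, w2, t2, hw2, ht2, hy⟩ := hy
  refine ⟨m1 + m2, Fin.append w1 w2, Fin.append t1 t2, ?_, ?_, fun k => ?_⟩
  · intro i
    exact i.addCases (fun j => by rw [Fin.append_left]; exact hw1 j)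
      (fun j => by rw [Fin.append_right]; exact hw2 j)
  · intro i
    exact i.addCases (fun j => by rw [Fin.append_left]; exact ht1 j)
      (fun j => by rw [Fin.append_right]; exact ht2 j)
  · rw [Pi.add_apply, hx k, hy k, Fin.sum_univ_add]
    congr 1 <;> refine Finset.sum_congr rfl fun j _ => ?_
    · rw [Fin.append_left, Fin.append_left]
    · rw [Fin.append_right, Fin.append_right]

lemma convex_momCone : Convex ℝ (momCone n) := by
  intro x hx y hy a b ha hb _
  exact add_mem_momCone (smul_mem_momCone ha hx) (smul_mem_momCone hb hy)

/-- The interior of the moment cone is nonempty. -/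
lemma momCone_interior_nonempty : (interior (momCone n)).Nonempty := by
  classical
  set M : Matrix (Fin (n + 1)) (Fin (n + 1)) ℝ := Matrix.of fun k i => ((i : ℕ) : ℝ) ^ (k : ℕ)
    with hM
  have hdet : M.det ≠ 0 := by
    have hMt : M = (Matrix.vandermonde fun i : Fin (n + 1) => ((i : ℕ) : ℝ)).transpose := by
      ext k i
      simp [hM, Matrix.vandermonde, Matrix.transpose]
    rw [hMt, Matrix.det_transpose, Matrix.det_vandermonde]
    refine Finset.prod_ne_zero_iff.mpr fun i _ => Finset.prod_ne_zero_iff.mpr fun j hj => ?_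
    have hij : (i : ℕ) < (j : ℕ) := by
      simpa [Finset.mem_filter, Finset.mem_Ioi] using hj
    have : ((i : ℕ) : ℝ) < ((j : ℕ) : ℝ) := by exact_mod_cast hij
    exact sub_ne_zero.mpr (ne_of_gt this)
  have hinv : Invertible M := M.invertibleOfIsUnitDet (isUnit_iff_ne_zero.mpr hdet)
  let eL : (Fin (n + 1) → ℝ) ≃ₗ[ℝ] (Fin (n + 1) → ℝ) := Matrix.toLinearEquiv' M hinv
  let eC : (Fin (n + 1) → ℝ) ≃L[ℝ] (Fin (n + 1) → ℝ) := eL.toContinuousLinearEquiv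
  have heC : ∀ w, eC w = M.mulVec w := fun w => rfl
  set U : Set (Fin (n + 1) → ℝ) := Set.univ.pi fun _ => Set.Ioi (0 : ℝ) with hU
  have hUopen : IsOpen U := isOpen_set_pi Set.finite_univ fun _ _ => isOpen_Ioi
  have himg : eC '' U ⊆ momCone n := by
    rintro x ⟨w, hw, rfl⟩
    refine ⟨n + 1, w, fun i => ((i : ℕ) : ℝ), fun i => le_of_lt (hw i (Set.mem_univ i)),
      fun i => Nat.cast_nonneg _, fun k => ?_⟩
    rw [heC]
    simp only [Matrix.mulVec, dotProduct, hM, Matrix.of_apply]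
    exact Finset.sum_congr rfl fun i _ => by ring
  have hopen : IsOpen (eC '' U) := eC.toHomeomorph.isOpenMap U hUopen
  refine ⟨eC (fun _ => 1), ?_⟩
  have hmem : eC (fun _ => 1) ∈ eC '' U := ⟨fun _ => 1, fun i _ => by norm_num, rfl⟩
  exact interior_maximal himg hopen hmem

/-- Dual criterion for membership in the closure of the moment cone. -/
lemma mem_closure_momCone_of_dual {x : Fin (n + 1) → ℝ}
    (h : ∀ f : (Fin (n + 1) → ℝ) →L[ℝ] ℝ, (∀ y ∈ momCone n, 0 ≤ f y) → 0 ≤ f x) :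
    x ∈ closure (momCone n) := by
  by_contra hx
  obtain ⟨f, u, hfx, hfC⟩ := geometric_hahn_banach_point_closed
    (convex_momCone.closure) isClosed_closure hx
  have hu0 : u < 0 := by
    have := hfC 0 (subset_closure zero_mem_momCone)
    simpa using this
  have hfpos : ∀ y ∈ momCone n, 0 ≤ f y := by
    intro y hy
    by_contra hneg
    push_neg at hneg
    have hc : 0 < (u - 1) / f y := div_pos_of_neg_of_neg (by linarith) hneg
    have hmem : ((u - 1) / f y) • y ∈ momCone n := smul_mem_momCone hc.le hy
    have := hfC _ (subset_closure hmem)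
    rw [_root_.map_smul] at this
    have : u < (u - 1) / f y * f y := this
    rw [div_mul_cancel₀ _ (ne_of_lt hneg)] at this
    linarith
  have := h f hfpos
  linarith

end Geometry

section Main

variable (n : ℕ)

/-- The polynomial attached to a linear functional on `ℝ^{n+1}`. -/
def polyOf (f : (Fin (n + 1) → ℝ) →L[ℝ] ℝ) : Polynomial ℝ :=
  ∑ k : Fin (n + 1), monomial (k : ℕ) (f (Pi.single k 1))

variable {n}

lemma natDegree_polyOf (f : (Fin (n + 1) → ℝ) →L[ℝ] ℝ) : (polyOf n f).natDegree ≤ n :=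
  natDegree_sum_le_of_forall_le _ _ fun k _ =>
    le_trans (natDegree_monomial_le _) (by omega)

lemma coeff_polyOf (f : (Fin (n + 1) → ℝ) →L[ℝ] ℝ) (j : Fin (n + 1)) :
    (polyOf n f).coeff (j : ℕ) = f (Pi.single j 1) := by
  rw [polyOf, finset_sum_coeff]
  rw [Finset.sum_eq_single j (fun k _ hk => ?_) (fun h => absurd (Finset.mem_univ j) h)]
  · rw [coeff_monomial, if_pos rfl]
  · rw [coeff_monomial, if_neg (fun h => hk (Fin.val_injective h))]

lemma apply_eq_sum (f : (Fin (n + 1) → ℝ) →L[ℝ] ℝ) (x : Fin (n + 1) → ℝ) :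
    f x = ∑ k : Fin (n + 1), x k * f (Pi.single k 1) := by
  have hx : x = ∑ k : Fin (n + 1), x k • (Pi.single k 1 : Fin (n + 1) → ℝ) := by
    funext j
    rw [Finset.sum_apply]
    rw [Finset.sum_eq_single j (fun k _ hk => ?_) (fun h => absurd (Finset.mem_univ j) h)]
    · simp
    · simp only [Pi.smul_apply, Pi.single_apply, smul_eq_mul]
      rw [if_neg (fun h => hk h.symm), mul_zero]
  conv_lhs => rw [hx]
  rw [map_sum]
  exact Finset.sum_congr rfl fun k _ => by rw [_root_.map_smul, smul_eq_mul]

lemma eval_polyOf (f : (Fin (n + 1) → ℝ) →L[ℝ] ℝ) (t : ℝ) :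
    (polyOf n f).eval t = f (momVec n t) := by
  rw [polyOf, eval_finset_sum, apply_eq_sum f (momVec n t)]
  exact Finset.sum_congr rfl fun k _ => by rw [eval_monomial, momVec]; ring

lemma polyOf_ne_zero (f : (Fin (n + 1) → ℝ) →L[ℝ] ℝ) (hf : f ≠ 0) : polyOf n f ≠ 0 := by
  intro h
  apply hf
  ext x
  rw [ContinuousLinearMap.zero_apply, apply_eq_sum]
  refine Finset.sum_eq_zero fun k _ => ?_
  have := coeff_polyOf f k
  rw [h, coeff_zero] at this
  rw [← this, mul_zero]

lemma Lf_polyOf (p : ℕ → ℝ) (f : (Fin (n + 1) → ℝ) →L[ℝ] ℝ) :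
    Lf n p (polyOf n f) = f (fun k : Fin (n + 1) => p (k : ℕ)) := by
  show ∑ j ∈ Finset.range (n + 1), (polyOf n f).coeff j * p j = _
  rw [← Fin.sum_univ_eq_sum_range (fun j => (polyOf n f).coeff j * p j) (n + 1),
    apply_eq_sum]
  exact Finset.sum_congr rfl fun j _ => by rw [coeff_polyOf]; ring

variable {p : ℕ → ℝ}
variable (h0 : Matrix.PosDef (Matrix.of fun k l : Fin (n / 2 + 1) => p ((k : ℕ) + (l : ℕ))))
variable (h1 : Matrix.PosDef
    (Matrix.of fun k l : Fin ((n - 1) / 2 + 1) => p ((k : ℕ) + (l : ℕ) + 1)))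

include h0 h1 in
lemma dual_pos {f : (Fin (n + 1) → ℝ) →L[ℝ] ℝ} (hfK : ∀ y ∈ momCone n, 0 ≤ f y)
    (hf : f ≠ 0) : 0 < f (fun k : Fin (n + 1) => p (k : ℕ)) := by
  rw [← Lf_polyOf p f]
  refine Lf_pos_of_nonneg h0 h1 (polyOf_ne_zero f hf) (natDegree_polyOf f) fun t ht => ?_
  rw [eval_polyOf]
  exact hfK _ (momVec_mem_momCone ht)

include h0 h1 in
set_option maxHeartbeats 1000000 in
theorem pvec_mem_momCone : (fun k : Fin (n + 1) => p (k : ℕ)) ∈ momCone n := by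
  classical
  set pv : Fin (n + 1) → ℝ := fun k => p (k : ℕ) with hpv
  set K : Set ((Fin (n + 1) → ℝ) →L[ℝ] ℝ) := {f | ∀ y ∈ momCone n, 0 ≤ f y} with hK
  have hKclosed : IsClosed K := by
    have : K = ⋂ y ∈ momCone n, {f : (Fin (n + 1) → ℝ) →L[ℝ] ℝ | 0 ≤ f y} := by
      ext f; simp [hK]
    rw [this]
    exact isClosed_biInter fun y _ => isClosed_le continuous_const
      ((ContinuousLinearMap.apply ℝ ℝ y).continuous)
  set S := K ∩ Metric.sphere 0 1 with hS
  have hScompact : IsCompact S := (isCompact_sphere 0 1).inter_left hKclosed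
  -- S is nonempty
  have hf₀ : (ContinuousLinearMap.proj (R := ℝ) (φ := fun _ : Fin (n + 1) => ℝ) 0) ∈ K := by
    rintro y ⟨m, w, t, hw, ht, hy⟩
    have : y 0 = ∑ i, w i * t i ^ ((0 : Fin (n + 1)) : ℕ) := hy 0
    simp only [Fin.val_zero, pow_zero, mul_one] at this
    show 0 ≤ y 0
    rw [this]
    exact Finset.sum_nonneg fun i _ => hw i
  set f₀ : (Fin (n + 1) → ℝ) →L[ℝ] ℝ :=
    ContinuousLinearMap.proj (R := ℝ) (φ := fun _ : Fin (n + 1) => ℝ) 0 with hf₀def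
  have hf₀ne : f₀ ≠ 0 := by
    intro h
    have : f₀ (fun _ => 1) = 0 := by rw [h]; rfl
    simp [hf₀def] at this
  have hf₀norm : 0 < ‖f₀‖ := norm_pos_iff.mpr hf₀ne
  have hSne : S.Nonempty := by
    refine ⟨‖f₀‖⁻¹ • f₀, ⟨?_, ?_⟩⟩
    · intro y hy
      rw [ContinuousLinearMap.smul_apply]
      exact mul_nonneg (inv_nonneg.mpr (norm_nonneg _)) (hf₀ y hy)
    · rw [mem_sphere_zero_iff_norm, norm_smul (‖f₀‖⁻¹) f₀, norm_inv, norm_norm]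
      exact inv_mul_cancel₀ (ne_of_gt hf₀norm)
  -- minimum of f ↦ f pv over S
  obtain ⟨fm, hfmS, hfmin⟩ := hScompact.exists_isMinOn hSne
    ((ContinuousLinearMap.apply ℝ ℝ pv).continuous.continuousOn)
  set ε := fm pv with hε
  have hfmne : fm ≠ 0 := by
    intro h
    have := hfmS.2
    rw [h, mem_sphere_zero_iff_norm, norm_zero] at this
    norm_num at this
  have hεpos : 0 < ε := dual_pos h0 h1 hfmS.1 hfmne
  have hlow : ∀ f ∈ K, ε * ‖f‖ ≤ f pv := by
    intro f hfK
    rcases eq_or_ne f 0 with rfl | hf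
    · simp
    · have hnf : 0 < ‖f‖ := norm_pos_iff.mpr hf
      have hgS : (‖f‖⁻¹ • f) ∈ S := by
        refine ⟨fun y hy => ?_, ?_⟩
        · rw [ContinuousLinearMap.smul_apply]
          exact mul_nonneg (inv_nonneg.mpr (norm_nonneg _)) (hfK y hy)
        · rw [mem_sphere_zero_iff_norm, norm_smul (‖f‖⁻¹) f, norm_inv, norm_norm]
          exact inv_mul_cancel₀ (ne_of_gt hnf)
      have := hfmin hgS
      have h2 : ε ≤ ‖f‖⁻¹ * f pv := this
      calc ε * ‖f‖ ≤ (‖f‖⁻¹ * f pv) * ‖f‖ := by nlinarith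
        _ = f pv := by field_simp
  -- a point in the interior
  obtain ⟨x₀, hx₀⟩ := momCone_interior_nonempty (n := n)
  set c := ‖pv - x₀‖ with hc
  have hcnn : 0 ≤ c := norm_nonneg _
  set δ := ε / (c + 1) with hδ
  have hδpos : 0 < δ := div_pos hεpos (by linarith)
  set z := pv + δ • (pv - x₀) with hz
  have hzcl : z ∈ closure (momCone n) := by
    apply mem_closure_momCone_of_dual
    intro f hfK
    have h1' : f z = f pv + δ * f (pv - x₀) := by rw [hz, map_add, _root_.map_smul, smul_eq_mul]
    have h2 : |f (pv - x₀)| ≤ ‖f‖ * c := by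
      rw [← Real.norm_eq_abs, hc]
      exact f.le_opNorm _
    have h3 : ε * ‖f‖ ≤ f pv := hlow f hfK
    have h4 : δ * c ≤ ε := by
      rw [hδ, div_mul_eq_mul_div, div_le_iff₀ (by linarith : (0:ℝ) < c + 1)]
      nlinarith
    have h5 : -(‖f‖ * c) ≤ f (pv - x₀) := neg_le_of_abs_le h2
    rw [h1']
    nlinarith [norm_nonneg f]
  -- pv is a convex combination of x₀ (interior) and z (closure)
  have hab : δ / (1 + δ) + 1 / (1 + δ) = 1 := by field_simp; ring
  have hkey : (δ / (1 + δ)) • x₀ + (1 / (1 + δ)) • z = pv := by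
    rw [hz]
    have hδ1 : (1 : ℝ) + δ ≠ 0 := by linarith
    match_scalars <;> (field_simp; try ring)
  have hint : pv ∈ interior (momCone n) := by
    rw [← hkey]
    exact convex_momCone.combo_interior_closure_mem_interior hx₀ hzcl
      (div_pos hδpos (by linarith)) (by positivity) hab
  exact interior_subset hint

end Main

open MeasureTheory in
theorem strict_moment (n : ℕ) (p : ℕ → ℝ)
    (h0 : Matrix.PosDef (Matrix.of fun k l : Fin (n / 2 + 1) => p ((k : ℕ) + (l : ℕ))))
    (h1 : Matrix.PosDef
      (Matrix.of fun k l : Fin ((n - 1) / 2 + 1) => p ((k : ℕ) + (l : ℕ) + 1))) :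
    ∃ σ : Measure ℝ, IsFiniteMeasure σ ∧ σ {x | x < 0} = 0 ∧
      (∀ k ≤ n, Integrable (fun t => t ^ k) σ) ∧ (∀ k ≤ n, p k = ∫ t, t ^ k ∂σ) := by
  obtain ⟨m, w, t, hw, ht, hx⟩ := pvec_mem_momCone h0 h1
  have hdiracInt : ∀ (k : ℕ) (i : Fin m),
      Integrable (fun x : ℝ => x ^ k) (Measure.dirac (t i)) := by
    intro k i
    refine ⟨(continuous_pow k).aestronglyMeasurable, ?_⟩
    rw [MeasureTheory.hasFiniteIntegral_def]
    rw [MeasureTheory.lintegral_dirac (t i) (fun x : ℝ => ‖x ^ k‖ₑ)]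
    exact ENNReal.coe_lt_top
  have hint : ∀ (k : ℕ) (i : Fin m),
      Integrable (fun x : ℝ => x ^ k) ((ENNReal.ofReal (w i)) • Measure.dirac (t i)) :=
    fun k i => (hdiracInt k i).smul_measure ENNReal.ofReal_ne_top
  refine ⟨∑ i : Fin m, (ENNReal.ofReal (w i)) • Measure.dirac (t i), ?_, ?_, ?_, ?_⟩
  · constructor
    rw [Measure.finset_sum_apply]
    refine ENNReal.sum_lt_top.mpr fun i _ => ?_
    rw [Measure.smul_apply, measure_univ, smul_eq_mul, mul_one]
    exact ENNReal.ofReal_lt_top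
  · rw [Measure.finset_sum_apply]
    refine Finset.sum_eq_zero fun i _ => ?_
    have hms : MeasurableSet {x : ℝ | x < 0} := measurableSet_Iio
    rw [Measure.smul_apply, Measure.dirac_apply' (t i) hms,
      Set.indicator_of_notMem (by simpa using not_lt.mpr (ht i)), smul_zero]
  · intro k _
    exact integrable_finset_sum_measure.mpr fun i _ => hint k i
  · intro k hk
    rw [integral_finset_sum_measure fun i _ => hint k i]
    have : ∀ i : Fin m, ∫ x, x ^ k ∂((ENNReal.ofReal (w i)) • Measure.dirac (t i))
        = w i * t i ^ k := by
      intro i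
      rw [integral_smul_measure, integral_dirac (fun x : ℝ => x ^ k) (t i),
        ENNReal.toReal_ofReal (hw i), smul_eq_mul]
    rw [Finset.sum_congr rfl fun i _ => this i]
    have hk' : k < n + 1 := by omega
    have := hx ⟨k, hk'⟩
    simpa using this

end StrictMomentAux

theorem stmt8 (n : ℕ) (hn : 1 ≤ n) (p : ℕ → ℝ)
    (h0 : Matrix.PosDef (Matrix.of fun k l : Fin (n / 2 + 1) => p ((k : ℕ) + (l : ℕ))))
    (h1 : Matrix.PosDef
      (Matrix.of fun k l : Fin ((n - 1) / 2 + 1) => p ((k : ℕ) + (l : ℕ) + 1))) :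
    IsStrictMomentSolution n p :=
  strict_moment n p h0 h1

end DSym
end
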